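/- arXiv:1406.4015 — 5 statements merged into one kernel-verified Lean document; each statement's English description precedes it below -/
import Mathlib

section
/- Hopf Argument: Let (X, d) be a metric space with a Borel probability measure μ and let f : X → X be a Borel measurable μ-preserving map. If p ∈ [1, ∞] and φ ∈ L^p(μ) is f-invariant (φ∘f = φ μ-a.e.), then φ is W^ss-saturated; that is, there is a Borel set G ⊆ X with μ(G) = 1 such that for all x, y ∈ G with y ∈ W^ss(x) one has φ(x) = φ(y). -/
open MeasureTheory Filter Topology
open scoped ENNReal

/-- The strong stable set of `x` under `f`. -/
def Wss {X : Type*} [MetricSpace X] (f : X → X) (x : X) : Set X :=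
  {y | Tendsto (fun n : ℕ => dist (f^[n] x) (f^[n] y)) atTop (nhds 0)}

/-- `φ` is saturated with respect to the partition `W`: there is a Borel set `G` of full
measure such that `φ` is constant on the pieces `W x` within `G`. -/
def Saturated {X : Type*} [MeasurableSpace X] (μ : Measure X)
    (W : X → Set X) (φ : X → ℝ) : Prop :=
  ∃ G : Set X, MeasurableSet G ∧ μ G = 1 ∧
    ∀ x ∈ G, ∀ y ∈ G, y ∈ W x → φ x = φ y

section Helpers

lemma UniformContinuous.max'' {X : Type*} [UniformSpace X] {f g : X → ℝ}
    (hf : UniformContinuous f) (hg : UniformContinuous g) :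
    UniformContinuous fun x => max (f x) (g x) := by
  have h : (fun x => max (f x) (g x))
      = fun x => (2⁻¹ : ℝ) * (f x + g x + |f x - g x|) := by
    funext x
    rcases le_total (f x) (g x) with h | h
    · rw [max_eq_right h, abs_of_nonpos (by linarith)]; ring
    · rw [max_eq_left h, abs_of_nonneg (by linarith)]; ring
  rw [h]
  have h2 : UniformContinuous fun x => (f x + g x + |f x - g x|) :=
    (hf.add hg).add ((Real.uniformContinuous_abs).comp (hf.sub hg))
  exact h2.const_smul (2⁻¹ : ℝ)


lemma UniformContinuous.min'' {X : Type*} [UniformSpace X] {f g : X → ℝ}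
    (hf : UniformContinuous f) (hg : UniformContinuous g) :
    UniformContinuous fun x => min (f x) (g x) := by
  have h : (fun x => min (f x) (g x))
      = fun x => (2⁻¹ : ℝ) * (f x + g x - |f x - g x|) := by
    funext x
    rcases le_total (f x) (g x) with h | h
    · rw [min_eq_left h, abs_of_nonpos (by linarith)]; ring
    · rw [min_eq_right h, abs_of_nonneg (by linarith)]; ring
  rw [h]
  have h2 : UniformContinuous fun x => (f x + g x - |f x - g x|) :=
    (hf.add hg).sub ((Real.uniformContinuous_abs).comp (hf.sub hg))
  exact h2.const_smul (2⁻¹ : ℝ)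

lemma clamp_abs_le {t a : ℝ} (h1 : -2 ≤ t) (h2 : t ≤ 2) :
    |t - max (-2) (min 2 a)| ≤ |t - a| := by
  rcases le_total a (-2) with h | h
  · rw [min_eq_right (by linarith), max_eq_left (by linarith)]
    rw [abs_of_nonneg (by linarith), abs_of_nonneg (by linarith)]
    linarith
  · rcases le_total 2 a with h' | h'
    · rw [min_eq_left h', max_eq_right (by norm_num)]
      rw [abs_of_nonpos (by linarith), abs_of_nonpos (by linarith)]
      linarith
    · rw [min_eq_right h', max_eq_right h]

end Helpers

section Maximal

variable {α : Type*} [MeasurableSpace α] {μ : Measure α} [IsProbabilityMeasure μ]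
  {f : α → α}

/-- Running maximum of Birkhoff sums. -/
def hopfMax (f : α → α) (g : α → ℝ) : ℕ → α → ℝ
  | 0 => fun _ => 0
  | (N + 1) => fun x => max (hopfMax f g N x) (birkhoffSum f g (N + 1) x)

lemma hopfMax_nonneg (g : α → ℝ) (N : ℕ) (x : α) : 0 ≤ hopfMax f g N x := by
  induction N with
  | zero => simp [hopfMax]
  | succ N ih => exact le_trans ih (le_max_left _ _)

lemma hopfMax_mono (g : α → ℝ) (N : ℕ) (x : α) :
    hopfMax f g N x ≤ hopfMax f g (N + 1) x := le_max_left _ _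

lemma hopfMax_succ_eq (g : α → ℝ) (N : ℕ) (x : α) :
    hopfMax f g (N + 1) x = max 0 (g x + hopfMax f g N (f x)) := by
  induction N generalizing x with
  | zero => simp [hopfMax, birkhoffSum_one]
  | succ N ih =>
    show max (hopfMax f g (N + 1) x) (birkhoffSum f g (N + 2) x) = _
    rw [ih, birkhoffSum_succ' f g (N + 1) x]
    show max (max 0 _) _ = _
    rw [max_assoc, max_add_add_left]
    rfl

lemma hopfMax_pos_iff (g : α → ℝ) (N : ℕ) (x : α) :
    0 < hopfMax f g N x ↔ ∃ n, 0 < n ∧ n ≤ N ∧ 0 < birkhoffSum f g n x := by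
  induction N with
  | zero =>
    simp only [hopfMax, lt_irrefl, false_iff]
    rintro ⟨n, h1, h2, _⟩; omega
  | succ N ih =>
    show 0 < max (hopfMax f g N x) (birkhoffSum f g (N + 1) x) ↔ _
    rw [lt_max_iff, ih]
    constructor
    · rintro (⟨n, h1, h2, h3⟩ | h)
      · exact ⟨n, h1, h2.trans (Nat.le_succ N), h3⟩
      · exact ⟨N + 1, Nat.succ_pos _, le_rfl, h⟩
    · rintro ⟨n, h1, h2, h3⟩
      rcases Nat.lt_succ_iff_lt_or_eq.mp (Nat.lt_succ_of_le h2) with h' | h'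
      · exact Or.inl ⟨n, h1, Nat.lt_succ_iff.mp h', h3⟩
      · subst h'; exact Or.inr h3
    
lemma measurable_birkhoffSum {g : α → ℝ} (hg : Measurable g) (hf : Measurable f) (n : ℕ) :
    Measurable fun x => birkhoffSum f g n x := by
  unfold birkhoffSum
  exact Finset.measurable_sum _ fun k _ => hg.comp (hf.iterate k)

lemma integrable_birkhoffSum {g : α → ℝ} (hg : Integrable g μ)
    (hf : MeasurePreserving f μ μ) (n : ℕ) :
    Integrable (fun x => birkhoffSum f g n x) μ := by
  unfold birkhoffSum
  exact integrable_finset_sum _ fun k _ =>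
    ((hf.iterate k).integrable_comp hg.aestronglyMeasurable).mpr hg

lemma measurable_hopfMax {g : α → ℝ} (hg : Measurable g) (hf : Measurable f) (N : ℕ) :
    Measurable (hopfMax f g N) := by
  induction N with
  | zero => exact measurable_const
  | succ N ih => exact ih.max (measurable_birkhoffSum hg hf (N + 1))

lemma integrable_hopfMax {g : α → ℝ} (hg : Integrable g μ)
    (hf : MeasurePreserving f μ μ) (N : ℕ) :
    Integrable (hopfMax f g N) μ := by
  induction N with
  | zero => exact (integrable_const 0).congr (by simp [hopfMax])
  | succ N ih =>
    have := ih.sup (integrable_birkhoffSum hg hf (N + 1))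
    exact this.congr (by filter_upwards with x; rfl)

/-- Garsia's maximal ergodic lemma. -/
lemma hopf_garsia {g : α → ℝ} (hgm : Measurable g) (hgi : Integrable g μ)
    (hf : MeasurePreserving f μ μ) (N : ℕ) :
    0 ≤ ∫ x in {x | 0 < hopfMax f g N x}, g x ∂μ := by
  cases N with
  | zero =>
    have : {x : α | 0 < hopfMax f g 0 x} = ∅ := by
      ext x; simp [hopfMax]
    rw [this]; simp
  | succ N =>
    set E := {x | 0 < hopfMax f g (N + 1) x} with hE
    have hME : MeasurableSet E :=
      measurableSet_lt measurable_const (measurable_hopfMax hgm hf.measurable (N + 1))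
    have hMN : Integrable (hopfMax f g N) μ := integrable_hopfMax hgi hf N
    have hMN1 : Integrable (hopfMax f g (N + 1)) μ := integrable_hopfMax hgi hf (N + 1)
    have hMNf : Integrable (fun x => hopfMax f g N (f x)) μ :=
      (hf.integrable_comp (measurable_hopfMax hgm hf.measurable N).aestronglyMeasurable).mpr hMN
    -- on E, g x = hopfMax (N+1) x - hopfMax N (f x)
    have key : ∀ x ∈ E, g x = hopfMax f g (N + 1) x - hopfMax f g N (f x) := by
      intro x hx
      have h1 := hopfMax_succ_eq (f := f) g N x
      have h2 : 0 < hopfMax f g (N + 1) x := hx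
      rw [h1] at h2 ⊢
      rw [max_eq_right]
      · ring
      · by_contra hcon
        push_neg at hcon
        rw [max_eq_left hcon.le] at h2
        exact lt_irrefl _ h2
    have hint1 : ∫ x in E, g x ∂μ
        = ∫ x in E, (hopfMax f g (N + 1) x - hopfMax f g N (f x)) ∂μ :=
      setIntegral_congr_fun hME key
    rw [hint1, integral_sub (hMN1.integrableOn) (hMNf.integrableOn)]
    have e1 : ∫ x in E, hopfMax f g (N + 1) x ∂μ = ∫ x, hopfMax f g (N + 1) x ∂μ := by
      apply setIntegral_eq_integral_of_forall_compl_eq_zero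
      intro x hx
      have h0 := hopfMax_nonneg (f := f) g (N + 1) x
      have h1 : ¬ (0 < hopfMax f g (N + 1) x) := hx
      linarith
    have e2 : ∫ x in E, hopfMax f g N (f x) ∂μ ≤ ∫ x, hopfMax f g N (f x) ∂μ := by
      apply setIntegral_le_integral hMNf
      filter_upwards with x
      exact hopfMax_nonneg g N (f x)
    have e3 : ∫ x, hopfMax f g N (f x) ∂μ = ∫ x, hopfMax f g N x ∂μ := by
      have := hf.map_eq
      calc ∫ x, hopfMax f g N (f x) ∂μ
          = ∫ y, hopfMax f g N y ∂(Measure.map f μ) :=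
            (integral_map hf.measurable.aemeasurable
              ((measurable_hopfMax hgm hf.measurable N).aestronglyMeasurable.mono_measure
                (le_of_eq this))).symm
        _ = ∫ x, hopfMax f g N x ∂μ := by rw [this]
    have e4 : ∫ x, hopfMax f g N x ∂μ ≤ ∫ x, hopfMax f g (N + 1) x ∂μ :=
      integral_mono hMN hMN1 (fun x => hopfMax_mono g N x)
    rw [e1]
    linarith

/-- Maximal ergodic inequality. -/
lemma hopf_maximal {h : α → ℝ} (hm : Measurable h) (hint : Integrable h μ)
    (hf : MeasurePreserving f μ μ) {c : ℝ} (hc : 0 < c) :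
    μ {x | ∃ n : ℕ, 0 < n ∧ c * n < birkhoffSum f h n x}
      ≤ ENNReal.ofReal ((∫ x, |h x| ∂μ) / c) := by
  set g : α → ℝ := fun x => h x - c with hg
  have hgm : Measurable g := hm.sub measurable_const
  have hgi : Integrable g μ := hint.sub (integrable_const c)
  have hScg : ∀ n x, birkhoffSum f g n x = birkhoffSum f h n x - n * c := by
    intro n x
    simp only [birkhoffSum, hg]
    rw [Finset.sum_sub_distrib, Finset.sum_const, Finset.card_range,
      nsmul_eq_mul]
  have hsetEq : ∀ n x, (0 < birkhoffSum f g n x) ↔ (c * n < birkhoffSum f h n x) := by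
    intro n x
    rw [hScg]
    constructor <;> intro <;> linarith [mul_comm c (n : ℝ)]
  set E : ℕ → Set α := fun N => {x | 0 < hopfMax f g N x} with hEdef
  have hEmeas : ∀ N, MeasurableSet (E N) := fun N =>
    measurableSet_lt measurable_const (measurable_hopfMax hgm hf.measurable N)
  have hEmono : Monotone E := by
    intro M N hMN x hx
    simp only [hEdef, Set.mem_setOf_eq] at hx ⊢
    rcases (hopfMax_pos_iff g M x).mp hx with ⟨n, h1, h2, h3⟩
    exact (hopfMax_pos_iff g N x).mpr ⟨n, h1, h2.trans hMN, h3⟩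
  have hEU : {x | ∃ n : ℕ, 0 < n ∧ c * n < birkhoffSum f h n x} = ⋃ N, E N := by
    ext x
    simp only [Set.mem_setOf_eq, Set.mem_iUnion, hEdef, hopfMax_pos_iff]
    constructor
    · rintro ⟨n, h1, h2⟩
      exact ⟨n, n, h1, le_rfl, (hsetEq n x).mpr h2⟩
    · rintro ⟨N, n, h1, _, h3⟩
      exact ⟨n, h1, (hsetEq n x).mp h3⟩
  have hbound : ∀ N, μ (E N) ≤ ENNReal.ofReal ((∫ x, |h x| ∂μ) / c) := by
    intro N
    have hgar := hopf_garsia hgm hgi hf N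
    have h1 : ∫ x in E N, g x ∂μ
        = (∫ x in E N, h x ∂μ) - c * (μ (E N)).toReal := by
      rw [hg]
      rw [integral_sub (hint.integrableOn) (integrable_const c).integrableOn]
      rw [setIntegral_const]
      rw [smul_eq_mul, mul_comm]
      rfl
    have h2 : ∫ x in E N, h x ∂μ ≤ ∫ x, |h x| ∂μ := by
      calc ∫ x in E N, h x ∂μ ≤ ∫ x in E N, |h x| ∂μ :=
            setIntegral_mono_on hint.integrableOn hint.abs.integrableOn (hEmeas N)
              (fun x _ => le_abs_self _)
        _ ≤ ∫ x, |h x| ∂μ := setIntegral_le_integral hint.abs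
              (Filter.Eventually.of_forall fun x => abs_nonneg _)
    have h3 : c * (μ (E N)).toReal ≤ ∫ x, |h x| ∂μ := by
      rw [h1] at hgar; linarith
    have h4 : (μ (E N)).toReal ≤ (∫ x, |h x| ∂μ) / c := by
      rw [le_div_iff₀ hc]; linarith [h3, mul_comm (μ (E N)).toReal c]
    exact ENNReal.le_ofReal_iff_toReal_le (measure_ne_top μ _) (by positivity) |>.mpr h4
  rw [hEU, Directed.measure_iUnion (hEmono.directed_le)]
  exact iSup_le hbound

end Maximal

section Density

variable {X : Type*} [MetricSpace X] [MeasurableSpace X] [BorelSpace X]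
  {μ : Measure X} [IsProbabilityMeasure μ]

lemma hopf_indicator_approx {A : Set X} (hA : MeasurableSet A) (c : ℝ) {ε : ℝ≥0∞}
    (hε : ε ≠ 0) (hε' : ε ≠ ∞) :
    ∃ ψ : X → ℝ, UniformContinuous ψ ∧
      eLpNorm (fun x => Set.indicator A (fun _ => c) x - ψ x) 1 μ < ε := by
  -- choose δ
  set δ : ℝ≥0∞ := (ε / 2) / (‖c‖₊ + 1) with hδdef
  have hδ0 : δ ≠ 0 := by
    apply ENNReal.div_ne_zero.mpr
    exact ⟨ENNReal.div_ne_zero.mpr ⟨hε, by norm_num⟩, by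
      simp [ENNReal.add_ne_top]⟩
  have hcδ : (‖c‖₊ : ℝ≥0∞) * δ ≤ ε / 2 := by
    rw [hδdef]
    calc (‖c‖₊ : ℝ≥0∞) * ((ε / 2) / (‖c‖₊ + 1))
        ≤ ((‖c‖₊ : ℝ≥0∞) + 1) * ((ε / 2) / (‖c‖₊ + 1)) := by gcongr; exact le_self_add
      _ = ε / 2 := ENNReal.mul_div_cancel' (by simp) (by simp [ENNReal.add_ne_top])
  -- closed set F ⊆ A with μ (A \ F) < δ
  obtain ⟨F, hFA, hFclosed, hFsmall⟩ := hA.exists_isClosed_diff_lt (measure_ne_top μ A) hδ0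
  have hFmeas : MeasurableSet F := hFclosed.measurableSet
  -- the error from replacing A by F
  have step1 : eLpNorm (fun x => Set.indicator A (fun _ => c) x
      - Set.indicator F (fun _ => c) x) 1 μ ≤ ε / 2 := by
    have heq : (fun x => Set.indicator A (fun _ => c) x - Set.indicator F (fun _ => c) x)
        = Set.indicator (A \ F) (fun _ => c) := by
      funext x
      by_cases hx : x ∈ F
      · have hxA : x ∈ A := hFA hx
        simp [Set.indicator_apply, Set.mem_diff, hx, hxA]
      · by_cases hx2 : x ∈ A <;> simp [Set.indicator_apply, Set.mem_diff, hx, hx2]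
    rw [heq, eLpNorm_one_eq_lintegral_enorm]
    have : ∀ x, (‖Set.indicator (A \ F) (fun _ => c) x‖₊ : ℝ≥0∞)
        = Set.indicator (A \ F) (fun _ => (‖c‖₊ : ℝ≥0∞)) x := by
      intro x
      by_cases hx : x ∈ A \ F <;> simp [hx]
    calc ∫⁻ x, (‖Set.indicator (A \ F) (fun _ => c) x‖₊ : ℝ≥0∞) ∂μ
        = ∫⁻ x, Set.indicator (A \ F) (fun _ => (‖c‖₊ : ℝ≥0∞)) x ∂μ := by
          simp_rw [this]
      _ = (‖c‖₊ : ℝ≥0∞) * μ (A \ F) := by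
          rw [lintegral_indicator (hA.diff hFmeas)]
          simp [setLIntegral_const, mul_comm]
      _ ≤ (‖c‖₊ : ℝ≥0∞) * δ := mul_le_mul_right hFsmall.le _
      _ ≤ ε / 2 := hcδ
  by_cases hFne : F.Nonempty
  · -- Lipschitz bump functions
    set ρ : ℕ → X → ℝ := fun m x => max 0 (1 - m * Metric.infDist x F) with hρ
    have hρuc : ∀ m, UniformContinuous (ρ m) :=
      fun m => (uniformContinuous_const.max''
        (uniformContinuous_const.sub ((Metric.uniformContinuous_infDist_pt F).const_mul' (m : ℝ))))
    have hρ01 : ∀ m x, 0 ≤ ρ m x ∧ ρ m x ≤ 1 := by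
      intro m x
      refine ⟨le_max_left _ _, ?_⟩
      apply max_le (by norm_num)
      have : 0 ≤ (m : ℝ) * Metric.infDist x F :=
        mul_nonneg (Nat.cast_nonneg m) Metric.infDist_nonneg
      linarith
    have hρlim : ∀ x, Tendsto (fun m => ρ m x) atTop (𝓝 (Set.indicator F (fun _ => (1:ℝ)) x)) := by
      intro x
      by_cases hx : x ∈ F
      · have : ∀ m, ρ m x = 1 := by
          intro m
          rw [hρ]
          simp [Metric.infDist_zero_of_mem hx]
        rw [Set.indicator_of_mem hx]
        simp_rw [this]
        exact tendsto_const_nhds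
      · have hd : 0 < Metric.infDist x F :=
          (hFclosed.notMem_iff_infDist_pos hFne).mp hx
        rw [Set.indicator_of_notMem hx]
        have hev : ∀ᶠ m : ℕ in atTop, ρ m x = 0 := by
          have htend : Tendsto (fun m : ℕ => (m : ℝ) * Metric.infDist x F) atTop atTop :=
            Tendsto.atTop_mul_const hd tendsto_natCast_atTop_atTop
          filter_upwards [htend.eventually_ge_atTop 1] with m hm
          rw [hρ]
          simp only
          rw [max_eq_left]
          linarith
        exact Tendsto.congr' (hev.mono fun m hm => hm.symm) tendsto_const_nhds
    -- dominated convergence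
    have hdom : Tendsto (fun m => ∫⁻ x, (‖c * ρ m x - Set.indicator F (fun _ => c) x‖₊ : ℝ≥0∞) ∂μ)
        atTop (𝓝 0) := by
      have h0 : (0 : ℝ≥0∞) = ∫⁻ (_ : X), (‖(0:ℝ)‖₊ : ℝ≥0∞) ∂μ := by simp
      rw [h0]
      apply tendsto_lintegral_of_dominated_convergence (fun _ => (2 * ‖c‖₊ : ℝ≥0∞))
      · intro m
        apply Measurable.coe_nnreal_ennreal
        apply Measurable.nnnorm
        exact (measurable_const.mul (hρuc m).continuous.measurable).sub
          (measurable_const.indicator hFmeas)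
      · intro m
        filter_upwards with x
        have h1a : ‖c * ρ m x‖ ≤ ‖c‖ * 1 := by
          rw [norm_mul]
          apply mul_le_mul_of_nonneg_left _ (norm_nonneg c)
          rw [Real.norm_eq_abs, abs_of_nonneg (hρ01 m x).1]
          exact (hρ01 m x).2
        have h1b : ‖Set.indicator F (fun _ => c) x‖ ≤ ‖c‖ := by
          by_cases hx : x ∈ F <;> simp [hx]
        have h1 : ‖c * ρ m x - Set.indicator F (fun _ => c) x‖ ≤ 2 * ‖c‖ := by
          calc ‖c * ρ m x - Set.indicator F (fun _ => c) x‖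
              ≤ ‖c * ρ m x‖ + ‖Set.indicator F (fun _ => c) x‖ := norm_sub_le _ _
            _ ≤ ‖c‖ * 1 + ‖c‖ := add_le_add h1a h1b
            _ = 2 * ‖c‖ := by ring
        calc (‖c * ρ m x - Set.indicator F (fun _ => c) x‖₊ : ℝ≥0∞)
            = ENNReal.ofReal ‖c * ρ m x - Set.indicator F (fun _ => c) x‖ :=
              (ofReal_norm _).symm
          _ ≤ ENNReal.ofReal (2 * ‖c‖) := ENNReal.ofReal_le_ofReal h1
          _ = 2 * (‖c‖₊ : ℝ≥0∞) := by
              rw [ENNReal.ofReal_mul (by norm_num : (0:ℝ) ≤ 2), ofReal_norm, enorm_eq_nnnorm]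
              norm_num
      · rw [lintegral_const, measure_univ, mul_one]
        exact ENNReal.mul_ne_top (by norm_num) ENNReal.coe_ne_top
      · filter_upwards with x
        have : Tendsto (fun m => c * ρ m x - Set.indicator F (fun _ => c) x) atTop (𝓝 0) := by
          have h1 : Tendsto (fun m => c * ρ m x) atTop
              (𝓝 (c * Set.indicator F (fun _ => (1:ℝ)) x)) :=
            (hρlim x).const_mul c
          have h2 : c * Set.indicator F (fun _ => (1:ℝ)) x = Set.indicator F (fun _ => c) x := by
            by_cases hx : x ∈ F <;> simp [hx]
          rw [h2] at h1
          simpa using h1.sub_const (Set.indicator F (fun _ => c) x)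
        have h3 := this.nnnorm
        exact ENNReal.tendsto_coe.mpr (by simpa using h3)
    -- pick m
    have hε2 : (0 : ℝ≥0∞) < ε / 2 := by
      apply ENNReal.div_pos hε (by norm_num)
    obtain ⟨m, hm⟩ := (hdom.eventually_lt_const hε2).exists
    refine ⟨fun x => c * ρ m x, (hρuc m).const_mul' c, ?_⟩
    have tri : eLpNorm (fun x => Set.indicator A (fun _ => c) x - c * ρ m x) 1 μ
        ≤ eLpNorm (fun x => Set.indicator A (fun _ => c) x - Set.indicator F (fun _ => c) x) 1 μ
          + eLpNorm (fun x => Set.indicator F (fun _ => c) x - c * ρ m x) 1 μ := by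
      have heq : (fun x => Set.indicator A (fun _ => c) x - c * ρ m x)
          = (fun x => (Set.indicator A (fun _ => c) x - Set.indicator F (fun _ => c) x)
            + (Set.indicator F (fun _ => c) x - c * ρ m x)) := by
        funext x; ring
      rw [heq]
      apply eLpNorm_add_le
      · exact ((measurable_const.indicator hA).sub
          (measurable_const.indicator hFmeas)).aestronglyMeasurable
      · exact ((measurable_const.indicator hFmeas).sub
          (measurable_const.mul (hρuc m).continuous.measurable)).aestronglyMeasurable
      · exact le_rfl
    have h2 : eLpNorm (fun x => Set.indicator F (fun _ => c) x - c * ρ m x) 1 μ < ε / 2 := by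
      rw [eLpNorm_one_eq_lintegral_enorm]
      simp_rw [enorm_eq_nnnorm]
      have : ∀ x, (‖Set.indicator F (fun _ => c) x - c * ρ m x‖₊ : ℝ≥0∞)
          = (‖c * ρ m x - Set.indicator F (fun _ => c) x‖₊ : ℝ≥0∞) := by
        intro x; rw [← neg_sub, nnnorm_neg]
      simp_rw [this]
      exact hm
    calc eLpNorm (fun x => Set.indicator A (fun _ => c) x - c * ρ m x) 1 μ
        ≤ _ + _ := tri
      _ < ε / 2 + ε / 2 := by
          have hhalf : ε / 2 ≠ ⊤ := (ENNReal.div_lt_top hε' (by norm_num)).ne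
          exact ENNReal.add_lt_add_of_le_of_lt (ne_top_of_le_ne_top hhalf step1) step1 h2
      _ = ε := ENNReal.add_halves ε
  · -- F empty
    rw [Set.not_nonempty_iff_eq_empty] at hFne
    subst hFne
    refine ⟨fun _ => 0, uniformContinuous_const, ?_⟩
    have hAsmall : μ A < δ := by
      simpa using hFsmall
    have : eLpNorm (fun x => Set.indicator A (fun _ => c) x - 0) 1 μ ≤ ε / 2 := by
      have heq : (fun x => Set.indicator A (fun _ => c) x - 0)
          = Set.indicator A (fun _ => c) := by funext x; ring
      rw [heq, eLpNorm_one_eq_lintegral_enorm]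
      have hx : ∀ x, (‖Set.indicator A (fun _ => c) x‖₊ : ℝ≥0∞)
          = Set.indicator A (fun _ => (‖c‖₊ : ℝ≥0∞)) x := by
        intro x; by_cases hx : x ∈ A <;> simp [hx]
      calc ∫⁻ x, (‖Set.indicator A (fun _ => c) x‖₊ : ℝ≥0∞) ∂μ
          = (‖c‖₊ : ℝ≥0∞) * μ A := by
            simp_rw [hx]
            rw [lintegral_indicator hA]
            simp [setLIntegral_const, mul_comm]
        _ ≤ (‖c‖₊ : ℝ≥0∞) * δ := mul_le_mul_right hAsmall.le _
        _ ≤ ε / 2 := hcδ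
    calc eLpNorm (fun x => Set.indicator A (fun _ => c) x - 0) 1 μ
        ≤ ε / 2 := this
      _ < ε := ENNReal.half_lt_self hε hε' 

lemma hopf_simple_approx (s : SimpleFunc X ℝ) {ε : ℝ≥0∞} (hε : ε ≠ 0) (hε' : ε ≠ ∞) :
    ∃ ψ : X → ℝ, UniformContinuous ψ ∧
      eLpNorm (fun x => s x - ψ x) 1 μ < ε := by
  induction s using SimpleFunc.induction generalizing ε with
  | const c hs =>
    obtain ⟨ψ, h1, h2⟩ := hopf_indicator_approx (μ := μ) hs c hε hε'
    exact ⟨ψ, h1, by simpa [SimpleFunc.piecewise_apply, Set.indicator] using h2⟩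
  | @add s1 s2 hdisj h1 h2 =>
    have hhalf0 : (ε / 2) ≠ 0 := by
      simp [ENNReal.div_eq_zero_iff, hε]
    have hhalft : (ε / 2) ≠ ⊤ := (ENNReal.div_lt_top hε' (by norm_num)).ne
    obtain ⟨ψ1, hu1, he1⟩ := h1 hhalf0 hhalft
    obtain ⟨ψ2, hu2, he2⟩ := h2 hhalf0 hhalft
    refine ⟨fun x => ψ1 x + ψ2 x, hu1.add hu2, ?_⟩
    have heq : (fun x => (s1 + s2) x - (ψ1 x + ψ2 x))
        = fun x => (s1 x - ψ1 x) + (s2 x - ψ2 x) := by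
      funext x
      simp [SimpleFunc.coe_add]
      ring
    rw [heq]
    calc eLpNorm (fun x => (s1 x - ψ1 x) + (s2 x - ψ2 x)) 1 μ
        ≤ eLpNorm (fun x => s1 x - ψ1 x) 1 μ + eLpNorm (fun x => s2 x - ψ2 x) 1 μ := by
          apply eLpNorm_add_le
          · exact (s1.measurable.sub hu1.continuous.measurable).aestronglyMeasurable
          · exact (s2.measurable.sub hu2.continuous.measurable).aestronglyMeasurable
          · exact le_rfl
      _ < ε / 2 + ε / 2 := ENNReal.add_lt_add he1 he2
      _ = ε := ENNReal.add_halves ε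

lemma hopf_unif_dense {g : X → ℝ} (hg : MemLp g 1 μ) {ε : ℝ≥0∞} (hε : ε ≠ 0) (hε' : ε ≠ ∞) :
    ∃ ψ : X → ℝ, UniformContinuous ψ ∧
      eLpNorm (fun x => g x - ψ x) 1 μ < ε := by
  have hhalf0 : (ε / 2) ≠ 0 := by
    simp [ENNReal.div_eq_zero_iff, hε]
  have hhalft : (ε / 2) ≠ ⊤ := (ENNReal.div_lt_top hε' (by norm_num)).ne
  obtain ⟨s, hs1, hs2⟩ := hg.exists_simpleFunc_eLpNorm_sub_lt (by norm_num : (1:ℝ≥0∞) ≠ ∞) hhalf0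
  obtain ⟨ψ, hu, he⟩ := hopf_simple_approx (μ := μ) s hhalf0 hhalft
  refine ⟨ψ, hu, ?_⟩
  have heq : (fun x => g x - ψ x)
      = fun x => (g x - s x) + (s x - ψ x) := by funext x; ring
  rw [heq]
  calc eLpNorm (fun x => (g x - s x) + (s x - ψ x)) 1 μ
      ≤ eLpNorm (fun x => g x - s x) 1 μ + eLpNorm (fun x => s x - ψ x) 1 μ := by
        apply eLpNorm_add_le
        · exact hg.aestronglyMeasurable.sub s.aestronglyMeasurable
        · exact (s.measurable.sub hu.continuous.measurable).aestronglyMeasurable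
        · exact le_rfl
    _ < ε / 2 + ε / 2 := ENNReal.add_lt_add hs1 he
    _ = ε := ENNReal.add_halves ε

end Density

/-- **Hopf argument**: any `f`-invariant `φ ∈ L^p(μ)` is `W^ss`-saturated. -/
theorem hopf_argument {X : Type*} [MetricSpace X] [MeasurableSpace X] [BorelSpace X]
    (μ : Measure X) [IsProbabilityMeasure μ]
    (f : X → X) (hf : MeasurePreserving f μ μ)
    (p : ℝ≥0∞) (hp : 1 ≤ p)
    (φ : X → ℝ) (hφm : Measurable φ) (hφp : MemLp φ p μ)
    (hinv : φ ∘ f =ᵐ[μ] φ) :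
    Saturated μ (Wss f) φ := by
  classical
  -- Pass to a bounded function via `arctan`.
  set φt : X → ℝ := fun x => Real.arctan (φ x) with hφt
  have hφtm : Measurable φt := Real.measurable_arctan.comp hφm
  have hφtb : ∀ x, -2 ≤ φt x ∧ φt x ≤ 2 := by
    intro x
    have h1 := Real.arctan_lt_pi_div_two (φ x)
    have h2 := Real.neg_pi_div_two_lt_arctan (φ x)
    have h3 := Real.pi_le_four
    have h4 := Real.pi_pos
    constructor <;> [skip; skip] <;> simp only [hφt] <;> nlinarith
  have hinvt : ∀ᵐ x ∂μ, φt (f x) = φt x := by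
    filter_upwards [hinv] with x hx
    have : φ (f x) = φ x := hx
    simp only [hφt, this]
  -- Full measure set on which `φt` is constant along orbits.
  set E : Set X := {x | φt (f x) = φt x} with hE
  have hEm : MeasurableSet E := measurableSet_eq_fun (hφtm.comp hf.measurable) hφtm
  have hEfull : μ Eᶜ = 0 := by
    have := ae_iff.mp hinvt
    simpa [hE, Set.compl_setOf] using this
  set A : Set X := ⋂ n : ℕ, (f^[n]) ⁻¹' E with hA
  have hAm : MeasurableSet A :=
    MeasurableSet.iInter fun n => hEm.preimage (hf.measurable.iterate n)
  have hAc : μ Aᶜ = 0 := by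
    rw [hA, Set.compl_iInter]
    refine measure_iUnion_null fun n => ?_
    rw [← Set.preimage_compl, (hf.iterate n).measure_preimage hEm.compl.nullMeasurableSet]
    exact hEfull
  have hAorbit : ∀ x ∈ A, ∀ n : ℕ, φt (f^[n] x) = φt x := by
    intro x hx n
    induction n with
    | zero => simp
    | succ n ih =>
      have hxE : f^[n] x ∈ E := Set.mem_iInter.mp hx n
      have hxE' : φt (f (f^[n] x)) = φt (f^[n] x) := hxE
      rw [Function.iterate_succ_apply', hxE', ih]
  -- `φt` is in L¹.
  have hφt1 : MemLp φt 1 μ :=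
    MemLp.of_bound hφtm.aestronglyMeasurable 2
      (Filter.Eventually.of_forall fun x => by
        rw [Real.norm_eq_abs, abs_le]; exact ⟨(hφtb x).1, (hφtb x).2⟩)
  -- Choose uniformly continuous approximations.
  have hchoice : ∀ j : ℕ, ∃ χ : X → ℝ, UniformContinuous χ ∧
      ((∀ x, -2 ≤ χ x ∧ χ x ≤ 2) ∧ (∫ x, |φt x - χ x| ∂μ) ≤ (4:ℝ)⁻¹ ^ j) := by
    intro j
    have hpos : (0:ℝ) < (4:ℝ)⁻¹ ^ j := by positivity
    obtain ⟨ψ, hψu, hψe⟩ := hopf_unif_dense (μ := μ) hφt1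
      (ε := ENNReal.ofReal ((4:ℝ)⁻¹ ^ j)) (by simp [hpos]) ENNReal.ofReal_ne_top
    set χ : X → ℝ := fun x => max (-2) (min 2 (ψ x)) with hχ
    have hχu : UniformContinuous χ :=
      uniformContinuous_const.max'' (uniformContinuous_const.min'' hψu)
    have hbd : ∀ x, |φt x - χ x| ≤ |φt x - ψ x| := fun x =>
      clamp_abs_le (hφtb x).1 (hφtb x).2
    -- integrability of |φt - ψ|
    have hsubm : AEStronglyMeasurable (fun x => φt x - ψ x) μ :=
      (hφtm.sub hψu.continuous.measurable).aestronglyMeasurable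
    have hint : Integrable (fun x => φt x - ψ x) μ :=
      memLp_one_iff_integrable.mp ⟨hsubm, hψe.trans_le le_top⟩
    have hintχ : Integrable (fun x => |φt x - χ x|) μ := by
      apply Integrable.mono hint.norm
      · exact ((hφtm.sub hχu.continuous.measurable).abs).aestronglyMeasurable
      · filter_upwards with x
        rw [Real.norm_eq_abs, abs_abs, Real.norm_eq_abs]
        exact (hbd x).trans (le_abs_self _)
    refine ⟨χ, hχu, fun x => ⟨le_max_left _ _, max_le (by norm_num) (min_le_left _ _)⟩, ?_⟩
    have h1 : (∫ x, |φt x - χ x| ∂μ) ≤ ∫ x, |φt x - ψ x| ∂μ :=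
      integral_mono hintχ hint.abs hbd
    have h2 : (∫ x, |φt x - ψ x| ∂μ) < (4:ℝ)⁻¹ ^ j := by
      have h3 : (∫ x, |φt x - ψ x| ∂μ) = (∫⁻ x, (‖φt x - ψ x‖₊ : ℝ≥0∞) ∂μ).toReal := by
        have := integral_norm_eq_lintegral_enorm hsubm
        simp only [Real.norm_eq_abs] at this; exact this
      rw [h3]
      apply ENNReal.toReal_lt_of_lt_ofReal
      simp_rw [← enorm_eq_nnnorm]
      rw [← eLpNorm_one_eq_lintegral_enorm]
      exact hψe
    linarith
  choose χ hχu hχb hχint using hchoice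
  -- the approximation errors
  set g : ℕ → X → ℝ := fun j x => |φt x - χ j x| with hg
  have hgm : ∀ j, Measurable (g j) := fun j =>
    (hφtm.sub (hχu j).continuous.measurable).abs
  have hgnn : ∀ j x, 0 ≤ g j x := fun j x => abs_nonneg _
  have hgb : ∀ j x, g j x ≤ 4 := by
    intro j x
    have h1 := (hφtb x).1
    have h2 := (hφtb x).2
    have h3 : -2 ≤ χ j x := (hχb j x).1
    have h4 : χ j x ≤ 2 := (hχb j x).2
    rw [hg, abs_le]
    constructor <;> nlinarith
  have hgi : ∀ j, Integrable (g j) μ := by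
    intro j
    apply (integrable_const (4:ℝ)).mono ((hgm j).aestronglyMeasurable)
    filter_upwards with x
    rw [Real.norm_eq_abs, abs_of_nonneg (hgnn j x)]
    simpa using hgb j x
  -- bad sets via the maximal inequality
  set S : ℕ → Set X := fun j =>
    {x | ∃ n : ℕ, 0 < n ∧ (2:ℝ)⁻¹ ^ j * n < birkhoffSum f (g j) n x} with hS
  have hSm : ∀ j, MeasurableSet (S j) := by
    intro j
    have : S j = ⋃ n : ℕ, {x | 0 < n ∧ (2:ℝ)⁻¹ ^ j * n < birkhoffSum f (g j) n x} := by
      rw [hS]; ext x; simp [Set.mem_iUnion]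
    rw [this]
    refine MeasurableSet.iUnion fun n => ?_
    by_cases hn : 0 < n
    · simp only [hn, true_and]
      exact measurableSet_lt measurable_const (measurable_birkhoffSum (hgm j) hf.measurable n)
    · simp [hn]
  have hSbound : ∀ j, μ (S j) ≤ ENNReal.ofReal ((2:ℝ)⁻¹ ^ j) := by
    intro j
    have hc : (0:ℝ) < (2:ℝ)⁻¹ ^ j := by positivity
    have h1 := hopf_maximal (hgm j) (hgi j) hf hc
    refine le_trans h1 (ENNReal.ofReal_le_ofReal ?_)
    have h2 : (∫ x, |g j x| ∂μ) = ∫ x, g j x ∂μ := by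
      congr 1; funext x; exact abs_of_nonneg (hgnn j x)
    rw [h2, div_le_iff₀ hc]
    calc ∫ x, g j x ∂μ ≤ (4:ℝ)⁻¹ ^ j := hχint j
      _ = (2:ℝ)⁻¹ ^ j * (2:ℝ)⁻¹ ^ j := by
          rw [← mul_pow]; norm_num
  -- Borel–Cantelli
  have hsum : (∑' j, μ (S j)) ≠ ∞ := by
    apply ne_of_lt
    calc (∑' j, μ (S j)) ≤ ∑' j : ℕ, ENNReal.ofReal ((2:ℝ)⁻¹ ^ j) :=
          ENNReal.tsum_le_tsum hSbound
      _ = ∑' j : ℕ, (ENNReal.ofReal (2:ℝ)⁻¹) ^ j := by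
          congr 1; funext j; rw [← ENNReal.ofReal_pow (by norm_num)]
      _ < ∞ := by
          rw [ENNReal.tsum_geometric]
          apply ENNReal.inv_lt_top.mpr
          rw [ENNReal.ofReal_inv_of_pos (by norm_num)]
          have h2 : ENNReal.ofReal (2:ℝ) = 2 := by norm_num
          rw [h2]
          apply tsub_pos_of_lt
          norm_num [ENNReal.inv_lt_one]
  have hBC : μ (limsup S atTop) = 0 := measure_limsup_atTop_eq_zero hsum
  have hLm : MeasurableSet (limsup S atTop) := by
    rw [limsup_eq_iInf_iSup_of_nat]
    simp only [Set.iInf_eq_iInter, Set.iSup_eq_iUnion]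
    exact MeasurableSet.iInter fun n => MeasurableSet.iUnion fun i =>
      MeasurableSet.iUnion fun _ => hSm i
  -- the saturation set
  refine ⟨A ∩ (limsup S atTop)ᶜ, hAm.inter hLm.compl, ?_, ?_⟩
  · rw [← prob_compl_eq_zero_iff (hAm.inter hLm.compl)]
    rw [Set.compl_inter, compl_compl]
    exact le_antisymm (le_trans (measure_union_le _ _) (by rw [hAc, hBC]; simp)) (by positivity)
  · rintro x ⟨hxA, hxL⟩ y ⟨hyA, hyL⟩ hyW
    -- eventually both avoid the bad sets
    have hext : ∀ z : X, z ∉ limsup S atTop → ∃ N : ℕ, ∀ j ≥ N, z ∉ S j := by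
      intro z hz
      rw [limsup_eq_iInf_iSup_of_nat] at hz
      simp only [Set.iInf_eq_iInter, Set.iSup_eq_iUnion, Set.mem_iInter, Set.mem_iUnion,
        not_forall, not_exists] at hz
      obtain ⟨N, hN⟩ := hz
      exact ⟨N, fun j hj => hN j hj⟩
    obtain ⟨Nx, hNx⟩ := hext x hxL
    obtain ⟨Ny, hNy⟩ := hext y hyL
    -- the key estimate for each large j
    have hkey : ∀ j, Nx ≤ j → Ny ≤ j → |φt x - φt y| ≤ 2 * (2:ℝ)⁻¹ ^ j := by
      intro j hjx hjy
      have hgoodx : ∀ n : ℕ, 0 < n → birkhoffSum f (g j) n x ≤ (2:ℝ)⁻¹ ^ j * n := by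
        intro n hn
        by_contra hcon
        exact hNx j hjx ⟨n, hn, lt_of_not_ge hcon⟩
      have hgoody : ∀ n : ℕ, 0 < n → birkhoffSum f (g j) n y ≤ (2:ℝ)⁻¹ ^ j * n := by
        intro n hn
        by_contra hcon
        exact hNy j hjy ⟨n, hn, lt_of_not_ge hcon⟩
      set u : ℕ → ℝ := fun k => |χ j (f^[k] x) - χ j (f^[k] y)| with hu
      have hu0 : Tendsto u atTop (𝓝 0) := by
        rw [Metric.tendsto_atTop]
        intro δ hδ
        obtain ⟨η, hη, hηimp⟩ := Metric.uniformContinuous_iff.mp (hχu j) δ hδ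
        have := Metric.tendsto_atTop.mp hyW η hη
        obtain ⟨N, hN⟩ := this
        refine ⟨N, fun k hk => ?_⟩
        have h1 : dist (f^[k] x) (f^[k] y) < η := by
          have h2 := hN k hk
          rwa [Real.dist_eq, sub_zero, abs_of_nonneg dist_nonneg] at h2
        have h3 := hηimp h1
        rw [Real.dist_eq, sub_zero, hu]
        rw [abs_of_nonneg (abs_nonneg _)]
        rwa [Real.dist_eq] at h3
      have hces : Tendsto (fun n : ℕ => (n:ℝ)⁻¹ * ∑ k ∈ Finset.range n, u k) atTop (𝓝 0) :=
        hu0.cesaro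
      have hmain : ∀ n : ℕ, 0 < n →
          |φt x - φt y| ≤ 2 * (2:ℝ)⁻¹ ^ j + (n:ℝ)⁻¹ * ∑ k ∈ Finset.range n, u k := by
        intro n hn
        have hnR : (0:ℝ) < n := Nat.cast_pos.mpr hn
        have hsum1 : (n:ℝ) * |φt x - φt y|
            ≤ birkhoffSum f (g j) n x + (∑ k ∈ Finset.range n, u k)
              + birkhoffSum f (g j) n y := by
          have heq : (∑ k ∈ Finset.range n, (φt (f^[k] x) - φt (f^[k] y)))
              = (n:ℝ) * (φt x - φt y) := by
            have : ∀ k, φt (f^[k] x) - φt (f^[k] y) = φt x - φt y := fun k => by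
              rw [hAorbit x hxA k, hAorbit y hyA k]
            rw [Finset.sum_congr rfl (fun k _ => this k)]
            rw [Finset.sum_const, Finset.card_range, nsmul_eq_mul]
          have habs : (n:ℝ) * |φt x - φt y|
              = |∑ k ∈ Finset.range n, (φt (f^[k] x) - φt (f^[k] y))| := by
            rw [heq, abs_mul, abs_of_nonneg (by positivity : (0:ℝ) ≤ (n:ℝ))]
          rw [habs]
          calc |∑ k ∈ Finset.range n, (φt (f^[k] x) - φt (f^[k] y))|
              ≤ ∑ k ∈ Finset.range n, |φt (f^[k] x) - φt (f^[k] y)| :=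
                Finset.abs_sum_le_sum_abs _ _
            _ ≤ ∑ k ∈ Finset.range n, (g j (f^[k] x) + u k + g j (f^[k] y)) := by
                apply Finset.sum_le_sum
                intro k _
                calc |φt (f^[k] x) - φt (f^[k] y)|
                    ≤ |φt (f^[k] x) - χ j (f^[k] x)| + |χ j (f^[k] x) - φt (f^[k] y)| :=
                      abs_sub_le _ _ _
                  _ ≤ |φt (f^[k] x) - χ j (f^[k] x)|
                      + (|χ j (f^[k] x) - χ j (f^[k] y)| + |χ j (f^[k] y) - φt (f^[k] y)|) := by
                      have := abs_sub_le (χ j (f^[k] x)) (χ j (f^[k] y)) (φt (f^[k] y))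
                      linarith
                  _ = g j (f^[k] x) + u k + g j (f^[k] y) := by
                      rw [hg, hu]
                      simp only
                      rw [abs_sub_comm (χ j (f^[k] y)) (φt (f^[k] y))]
                      ring
            _ = birkhoffSum f (g j) n x + (∑ k ∈ Finset.range n, u k)
                + birkhoffSum f (g j) n y := by
                rw [Finset.sum_add_distrib, Finset.sum_add_distrib]
                rfl
        have hsum2 : (n:ℝ) * |φt x - φt y|
            ≤ (2:ℝ)⁻¹ ^ j * n + (∑ k ∈ Finset.range n, u k) + (2:ℝ)⁻¹ ^ j * n := by
          have := hgoodx n hn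
          have := hgoody n hn
          linarith
        have hdiv : (n:ℝ) * (2 * (2:ℝ)⁻¹ ^ j + (n:ℝ)⁻¹ * ∑ k ∈ Finset.range n, u k)
            = (2:ℝ)⁻¹ ^ j * n + (∑ k ∈ Finset.range n, u k) + (2:ℝ)⁻¹ ^ j * n := by
          field_simp
          ring
        have := hsum2.trans_eq hdiv.symm
        exact le_of_mul_le_mul_left this hnR
      -- pass to the limit in n
      have hlim : Tendsto (fun n : ℕ => 2 * (2:ℝ)⁻¹ ^ j + (n:ℝ)⁻¹ * ∑ k ∈ Finset.range n, u k)
          atTop (𝓝 (2 * (2:ℝ)⁻¹ ^ j)) := by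
        have := (tendsto_const_nhds (x := 2 * (2:ℝ)⁻¹ ^ j) (f := atTop (α := ℕ))).add hces
        simpa using this
      apply ge_of_tendsto hlim
      filter_upwards [Filter.eventually_ge_atTop 1] with n hn
      exact hmain n hn
    -- let j → ∞
    have hfinal : |φt x - φt y| ≤ 0 := by
      have hlim2 : Tendsto (fun j : ℕ => 2 * (2:ℝ)⁻¹ ^ j) atTop (𝓝 0) := by
        have := (tendsto_pow_atTop_nhds_zero_of_lt_one
          (by norm_num : (0:ℝ) ≤ 2⁻¹) (by norm_num : (2:ℝ)⁻¹ < 1)).const_mul (2:ℝ)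
        simpa using this
      apply ge_of_tendsto hlim2
      filter_upwards [Filter.eventually_ge_atTop (max Nx Ny)] with j hj
      exact hkey j (le_trans (le_max_left _ _) hj) (le_trans (le_max_right _ _) hj)
    have : φt x = φt y := by
      have := abs_nonneg (φt x - φt y)
      have h0 : |φt x - φt y| = 0 := le_antisymm hfinal this
      have := abs_eq_zero.mp h0
      linarith [sub_eq_zero.mp this]
    exact Real.arctan_injective this
end

section
/- Let (X, d) be a metric space with a Borel probability measure μ and let f : X → X be an invertible Borel measurable μ-preserving map whose inverse is also Borel measurable and μ-preserving. Then every f-invariant φ ∈ L²(μ) (i.e. φ∘f = φ μ-a.e.) is both W^ss-saturated and W^su-saturated. -/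
open MeasureTheory Filter Topology
open scoped ENNReal

section HopfAux

open Metric Set
open scoped NNReal

variable {X : Type*} [MetricSpace X] [MeasurableSpace X] [BorelSpace X]
  {μ : Measure X} [IsProbabilityMeasure μ]

/-- Approximation of an indicator function by a Lipschitz function in L². -/
lemma indicator_lipschitz_approx {A : Set X} (hA : MeasurableSet A) (c : ℝ) {ε : ℝ≥0∞}
    (hε : ε ≠ 0) :
    ∃ ψ : X → ℝ, (∃ K, LipschitzWith K ψ) ∧ MemLp ψ 2 μ ∧
      eLpNorm (A.indicator (fun _ => c) - ψ) 2 μ < ε := by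
  rcases eq_or_ne c 0 with rfl | hc
  · refine ⟨0, ⟨0, LipschitzWith.const 0⟩, memLp_const 0, ?_⟩
    simpa [Set.indicator_zero] using hε.bot_lt
  have hc' : (‖c‖₊ : ℝ≥0∞) ≠ 0 := by simpa using hc
  -- choose the smallness threshold `t`
  set t : ℝ≥0∞ := min (ε / 2 / ‖c‖₊) 1 with ht_def
  have htne : t ≠ 0 := by
    simp only [ht_def, ne_eq, min_eq_iff]
    rintro (⟨h, -⟩ | ⟨h, -⟩)
    · rw [ENNReal.div_eq_zero_iff, ENNReal.div_eq_zero_iff] at h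
      rcases h with (h | h) | h
      · exact hε h
      · exact ENNReal.ofNat_ne_top h
      · simp at h
    · exact one_ne_zero h
  have htop : t ≠ ∞ := ne_top_of_le_ne_top ENNReal.one_ne_top (min_le_right _ _)
  have hct : (‖c‖₊ : ℝ≥0∞) * t < ε := by
    rcases eq_or_ne ε ∞ with rfl | hεtop
    · calc (‖c‖₊ : ℝ≥0∞) * t ≤ ‖c‖₊ * 1 := mul_le_mul_right (min_le_right _ _) _
        _ < ∞ := by simpa using ENNReal.coe_lt_top
    · calc (‖c‖₊ : ℝ≥0∞) * t ≤ ‖c‖₊ * (ε / 2 / ‖c‖₊) := mul_le_mul_right (min_le_left _ _) _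
        _ = ε / 2 := ENNReal.mul_div_cancel hc' ENNReal.coe_ne_top
        _ < ε := ENNReal.half_lt_self hε hεtop
  -- key fact : t * t ≠ 0
  have htt : t * t ≠ 0 := mul_ne_zero htne htne
  -- choose a closed set F ⊆ A with μ (A \ F) < t*t/2
  obtain ⟨F, hFA, hFc, hμF⟩ : ∃ F, F ⊆ A ∧ IsClosed F ∧ μ (A \ F) < t * t / 2 :=
    hA.exists_isClosed_diff_lt (measure_ne_top μ A) (by simp [ENNReal.div_eq_zero_iff, htt])
  -- key estimate: if the "bad set" E has measure < t*t, we win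
  have key : ∀ (ψ : X → ℝ) (E : Set X), MeasurableSet E → μ E < t * t →
      (∀ x, ‖(A.indicator (fun _ => c) - ψ) x‖ ≤ ‖E.indicator (fun _ => c) x‖) →
      eLpNorm (A.indicator (fun _ => c) - ψ) 2 μ < ε := by
    intro ψ E hEm hEμ hbound
    have h1 : eLpNorm (A.indicator (fun _ => c) - ψ) 2 μ ≤
        eLpNorm (E.indicator (fun _ => c)) 2 μ := eLpNorm_mono hbound
    have h2 : eLpNorm (E.indicator (fun _ => c) : X → ℝ) 2 μ =
        ‖c‖₊ * μ E ^ (1 / (2:ℝ≥0∞).toReal) := eLpNorm_indicator_const hEm two_ne_zero ENNReal.ofNat_ne_top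
    have h3 : μ E ^ (1 / (2:ℝ≥0∞).toReal) ≤ t := by
      have hle : μ E ≤ t * t := hEμ.le
      calc μ E ^ (1 / (2:ℝ≥0∞).toReal) ≤ (t * t) ^ (1 / (2:ℝ≥0∞).toReal) :=
            ENNReal.rpow_le_rpow hle (by norm_num)
        _ = t := by
            have h4 : (1 / (2:ℝ≥0∞).toReal) = (2:ℝ)⁻¹ := by norm_num
            rw [h4, ← pow_two, ← ENNReal.rpow_natCast t 2, ← ENNReal.rpow_mul]
            norm_num
    calc eLpNorm (A.indicator (fun _ => c) - ψ) 2 μ ≤ ‖c‖₊ * μ E ^ (1 / (2:ℝ≥0∞).toReal) :=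
          h1.trans h2.le
      _ ≤ ‖c‖₊ * t := mul_le_mul_right h3 _
      _ < ε := hct
  rcases F.eq_empty_or_nonempty with rfl | hFne
  · -- F empty : μ A itself is small, take ψ = 0
    refine ⟨0, ⟨0, LipschitzWith.const 0⟩, memLp_const 0, key 0 A hA ?_ fun x => ?_⟩
    · calc μ A = μ (A \ ∅) := by simp
        _ < t * t / 2 := hμF
        _ ≤ t * t := ENNReal.half_le_self
    · simp
  · -- F nonempty : choose δ with μ (thickening δ F \ F) small
    have hthick : Tendsto (fun r => μ (thickening r F)) (𝓝[>] 0) (𝓝 (μ F)) := by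
      refine tendsto_measure_thickening_of_isClosed ⟨1, one_pos, ?_⟩ hFc
      exact measure_ne_top μ _
    have hlt : μ F < μ F + t * t / 2 :=
      ENNReal.lt_add_right (measure_ne_top μ F) (by simp [ENNReal.div_eq_zero_iff, htt])
    have hev : ∀ᶠ r in 𝓝[>] (0:ℝ), μ (thickening r F) < μ F + t * t / 2 :=
      hthick.eventually_lt_const hlt
    obtain ⟨δ, hδsmall, hδIoi⟩ := (hev.and self_mem_nhdsWithin).exists
    have hδ0 : (0:ℝ) < δ := hδIoi
    have hthin : μ (thickening δ F \ F) < t * t / 2 := by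
      refine measure_diff_lt_of_lt_add hFc.measurableSet.nullMeasurableSet
        (self_subset_thickening hδ0 F) (measure_ne_top μ F) hδsmall
    -- the Lipschitz function
    set ψ : X → ℝ := fun x => c * max (1 - infDist x F / δ) 0 with hψdef
    have hmax01 : ∀ x, 0 ≤ max (1 - infDist x F / δ) 0 ∧ max (1 - infDist x F / δ) 0 ≤ 1 := by
      intro x
      refine ⟨le_max_right _ _, max_le ?_ zero_le_one⟩
      have := infDist_nonneg (s := F) (x := x)
      have : 0 ≤ infDist x F / δ := div_nonneg this hδ0.le
      linarith
    have hψlip : LipschitzWith (Real.toNNReal (|c| / δ)) ψ := by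
      refine LipschitzWith.of_dist_le_mul fun x y => ?_
      have hinf : |infDist x F - infDist y F| ≤ dist x y := by
        have := (lipschitz_infDist_pt (s := F)).dist_le_mul x y
        simpa [Real.dist_eq] using this
      have hmax : |max (1 - infDist x F / δ) 0 - max (1 - infDist y F / δ) 0| ≤
          |infDist x F - infDist y F| / δ := by
        calc |max (1 - infDist x F / δ) 0 - max (1 - infDist y F / δ) 0| ≤
            |(1 - infDist x F / δ) - (1 - infDist y F / δ)| :=
              abs_max_sub_max_le_abs _ _ _
          _ = |infDist x F - infDist y F| / δ := by
              have hrw : 1 - infDist x F / δ - (1 - infDist y F / δ) =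
                  (infDist y F - infDist x F) / δ := by ring
              rw [hrw, abs_div, abs_of_pos hδ0, abs_sub_comm]
      calc dist (ψ x) (ψ y) = |c| * |max (1 - infDist x F / δ) 0 - max (1 - infDist y F / δ) 0| := by
            rw [Real.dist_eq, hψdef]; rw [← mul_sub, abs_mul]
        _ ≤ |c| * (|infDist x F - infDist y F| / δ) :=
            mul_le_mul_of_nonneg_left hmax (abs_nonneg c)
        _ = (|c| / δ) * |infDist x F - infDist y F| := by ring
        _ ≤ (|c| / δ) * dist x y :=
            mul_le_mul_of_nonneg_left hinf (div_nonneg (abs_nonneg c) hδ0.le)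
        _ = (Real.toNNReal (|c| / δ) : ℝ) * dist x y := by
            rw [Real.coe_toNNReal _ (div_nonneg (abs_nonneg c) hδ0.le)]
    have hψmem : MemLp ψ 2 μ := by
      refine MemLp.of_bound hψlip.continuous.aestronglyMeasurable |c| (.of_forall fun x => ?_)
      have h := hmax01 x
      rw [hψdef]
      simp only [Real.norm_eq_abs, abs_mul]
      calc |c| * |max (1 - infDist x F / δ) 0| ≤ |c| * 1 := by
            refine mul_le_mul_of_nonneg_left ?_ (abs_nonneg c)
            rw [abs_of_nonneg h.1]; exact h.2
        _ = |c| := mul_one _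
    refine ⟨ψ, ⟨_, hψlip⟩, hψmem, key ψ ((A \ F) ∪ (thickening δ F \ F))
      ((hA.diff hFc.measurableSet).union
        (isOpen_thickening.measurableSet.diff hFc.measurableSet)) ?_ fun x => ?_⟩
    · calc μ ((A \ F) ∪ (thickening δ F \ F)) ≤ μ (A \ F) + μ (thickening δ F \ F) :=
          measure_union_le _ _
        _ < t * t / 2 + t * t / 2 := ENNReal.add_lt_add hμF hthin
        _ = t * t := ENNReal.add_halves _
    · rw [Pi.sub_apply]
      by_cases hxF : x ∈ F
      · have h0 : infDist x F = 0 := infDist_zero_of_mem hxF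
        have hψx : ψ x = c := by simp [hψdef, h0, hδ0.ne']
        rw [Set.indicator_of_mem (hFA hxF), hψx, sub_self, norm_zero]
        exact norm_nonneg _
      · by_cases hxT : x ∈ thickening δ F
        · have hxE : x ∈ A \ F ∪ thickening δ F \ F := Or.inr ⟨hxT, hxF⟩
          rw [Set.indicator_of_mem hxE]
          obtain ⟨hm0, hm1⟩ := hmax01 x
          by_cases hxA : x ∈ A
          · rw [Set.indicator_of_mem hxA]
            have hrw : c - ψ x = c * (1 - max (1 - infDist x F / δ) 0) := by
              rw [hψdef]; ring
            rw [hrw]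
            simp only [Real.norm_eq_abs, abs_mul]
            have h1 : |1 - max (1 - infDist x F / δ) 0| ≤ 1 := by
              rw [abs_of_nonneg (by linarith)]; linarith
            exact mul_le_of_le_one_right (abs_nonneg c) h1
          · rw [Set.indicator_of_notMem hxA, zero_sub, norm_neg]
            simp only [Real.norm_eq_abs, hψdef, abs_mul]
            rw [abs_of_nonneg hm0]
            exact mul_le_of_le_one_right (abs_nonneg c) hm1
        · have hge : δ ≤ infDist x F := by
            by_contra hlt'
            exact hxT ((mem_thickening_iff_infDist_lt hFne).mpr (lt_of_not_ge hlt'))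
          have hψx : ψ x = 0 := by
            rw [hψdef]
            simp only
            have h2 : 1 ≤ infDist x F / δ := (one_le_div hδ0).mpr hge
            rw [max_eq_right (by linarith), mul_zero]
          rw [hψx, sub_zero]
          by_cases hxA : x ∈ A
          · have hxE : x ∈ A \ F ∪ thickening δ F \ F := Or.inl ⟨hxA, hxF⟩
            rw [Set.indicator_of_mem hxE, Set.indicator_of_mem hxA]
          · rw [Set.indicator_of_notMem hxA, norm_zero]
            exact norm_nonneg _

/-- Approximation of a simple function by a Lipschitz function in L². -/
lemma simpleFunc_lipschitz_approx (s : SimpleFunc X ℝ) {ε : ℝ≥0∞} (hε : ε ≠ 0) :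
    ∃ ψ : X → ℝ, (∃ K, LipschitzWith K ψ) ∧ MemLp ψ 2 μ ∧ eLpNorm (⇑s - ψ) 2 μ < ε := by
  revert ε
  refine MeasureTheory.SimpleFunc.induction (motive := fun s => ∀ {ε : ℝ≥0∞}, ε ≠ 0 →
    ∃ ψ : X → ℝ, (∃ K, LipschitzWith K ψ) ∧ MemLp ψ 2 μ ∧ eLpNorm (⇑s - ψ) 2 μ < ε)
    ?_ ?_ s
  · intro c A hA ε hε
    simp only [SimpleFunc.coe_piecewise, SimpleFunc.coe_const, SimpleFunc.coe_zero,
      Set.piecewise_eq_indicator]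
    exact indicator_lipschitz_approx hA c hε
  · intro f g hdisj hf hg ε hε
    have hε2 : ε / 2 ≠ 0 := by simp [ENNReal.div_eq_zero_iff, hε]
    obtain ⟨ψf, ⟨Kf, hKf⟩, hf2, hferr⟩ := hf hε2
    obtain ⟨ψg, ⟨Kg, hKg⟩, hg2, hgerr⟩ := hg hε2
    refine ⟨ψf + ψg, ⟨Kf + Kg, hKf.add hKg⟩, hf2.add hg2, ?_⟩
    have hrw : ⇑(f + g) - (ψf + ψg) = (⇑f - ψf) + (⇑g - ψg) := by
      rw [SimpleFunc.coe_add]; abel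
    rw [hrw]
    calc eLpNorm ((⇑f - ψf) + (⇑g - ψg)) 2 μ ≤
        eLpNorm (⇑f - ψf) 2 μ + eLpNorm (⇑g - ψg) 2 μ :=
          eLpNorm_add_le (f.aestronglyMeasurable.sub hKf.continuous.aestronglyMeasurable)
            (g.aestronglyMeasurable.sub hKg.continuous.aestronglyMeasurable) one_le_two
      _ < ε / 2 + ε / 2 := ENNReal.add_lt_add hferr hgerr
      _ = ε := ENNReal.add_halves ε

/-- Approximation of an L² function by a Lipschitz function. -/
lemma memℒp_lipschitz_approx {φ : X → ℝ} (hφ2 : MemLp φ 2 μ) {ε : ℝ≥0∞} (hε : ε ≠ 0) :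
    ∃ ψ : X → ℝ, (∃ K, LipschitzWith K ψ) ∧ MemLp ψ 2 μ ∧ eLpNorm (φ - ψ) 2 μ < ε := by
  have hε2 : ε / 2 ≠ 0 := by simp [ENNReal.div_eq_zero_iff, hε]
  obtain ⟨s, hs, hsm⟩ := hφ2.exists_simpleFunc_eLpNorm_sub_lt ENNReal.ofNat_ne_top hε2
  obtain ⟨ψ, hψlip, hψ2, hψerr⟩ := simpleFunc_lipschitz_approx (μ := μ) s hε2
  refine ⟨ψ, hψlip, hψ2, ?_⟩
  have hrw : φ - ψ = (φ - ⇑s) + (⇑s - ψ) := by abel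
  rw [hrw]
  obtain ⟨K, hK⟩ := hψlip
  calc eLpNorm ((φ - ⇑s) + (⇑s - ψ)) 2 μ ≤
      eLpNorm (φ - ⇑s) 2 μ + eLpNorm (⇑s - ψ) 2 μ :=
        eLpNorm_add_le (hφ2.aestronglyMeasurable.sub s.aestronglyMeasurable)
          (s.aestronglyMeasurable.sub hK.continuous.aestronglyMeasurable) one_le_two
    _ < ε / 2 + ε / 2 := ENNReal.add_lt_add hs hψerr
    _ = ε := ENNReal.add_halves ε

set_option linter.unusedSectionVars false in
/-- Key step of the Hopf argument. -/
lemma hopf_key (f : X → X) (hf : MeasurePreserving f μ μ)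
    (φ : X → ℝ) (hφ2 : MemLp φ 2 μ) (hinv : φ ∘ f =ᵐ[μ] φ)
    (ψ : X → ℝ) (K : ℝ≥0) (hψl : LipschitzWith K ψ) (hψ2 : MemLp ψ 2 μ) :
    ∃ g : X → ℝ, AEStronglyMeasurable g μ ∧
      (∃ S : Set X, (∀ᵐ x ∂μ, x ∈ S) ∧ ∀ x ∈ S, ∀ y ∈ S, y ∈ Wss f x → g x = g y) ∧
      eLpNorm (g - φ) 2 μ ≤ eLpNorm (ψ - φ) 2 μ := by
  set U : Lp ℝ 2 μ →L[ℝ] Lp ℝ 2 μ :=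
    (Lp.compMeasurePreservingₗᵢ ℝ f hf).toContinuousLinearMap with hU_def
  have hUnorm : ‖U‖ ≤ 1 := LinearIsometry.norm_toContinuousLinearMap_le _
  have hUisom : ∀ h : Lp ℝ 2 μ, ‖U h‖ = ‖h‖ := fun h =>
    (Lp.compMeasurePreservingₗᵢ ℝ f hf).norm_map h
  have hUapp : ∀ h : Lp ℝ 2 μ, ⇑(U h) =ᵐ[μ] ⇑h ∘ f := fun h =>
    Lp.coeFn_compMeasurePreserving h hf
  set ψL : Lp ℝ 2 μ := hψ2.toLp ψ with hψL_def
  set φL : Lp ℝ 2 μ := hφ2.toLp φ with hφL_def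
  -- iterates of the Koopman operator
  have hUiter : ∀ (n : ℕ) (h : Lp ℝ 2 μ), ⇑((⇑U)^[n] h) =ᵐ[μ] ⇑h ∘ f^[n] := by
    intro n
    induction n with
    | zero => intro h; simp [Function.iterate_zero]
    | succ n ih =>
        intro h
        have h1 : (⇑U)^[n+1] h = (⇑U)^[n] (U h) := Function.iterate_succ_apply (⇑U) n h
        have h2 : ⇑((⇑U)^[n] (U h)) =ᵐ[μ] ⇑(U h) ∘ f^[n] := ih (U h)
        have h3 : ⇑(U h) ∘ f^[n] =ᵐ[μ] (⇑h ∘ f) ∘ f^[n] :=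
          (hf.iterate n).quasiMeasurePreserving.ae_eq_comp (hUapp h)
        rw [h1]
        refine (h2.trans h3).trans (Eventually.of_forall fun x => ?_)
        simp [Function.comp_apply, ← Function.iterate_succ_apply' f n]
  -- identification of abstract and pointwise Birkhoff averages
  have hbirk : ∀ N : ℕ, ⇑(birkhoffAverage ℝ (⇑U) _root_.id N ψL) =ᵐ[μ]
      fun x => birkhoffAverage ℝ f ψ N x := by
    intro N
    have hsum : ⇑(∑ n ∈ Finset.range N, (⇑U)^[n] ψL) =ᵐ[μ]
        fun x => ∑ n ∈ Finset.range N, ψ (f^[n] x) := by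
      induction N with
      | zero => simpa [Pi.zero_def] using Lp.coeFn_zero (E := ℝ) (p := 2) (μ := μ)
      | succ N ihN =>
          rw [Finset.sum_range_succ]
          refine (Lp.coeFn_add _ _).trans ?_
          have hterm : ⇑((⇑U)^[N] ψL) =ᵐ[μ] fun x => ψ (f^[N] x) := by
            refine (hUiter N ψL).trans ?_
            exact (hf.iterate N).quasiMeasurePreserving.ae_eq_comp (hψ2.coeFn_toLp)
          filter_upwards [ihN, hterm] with x h1 h2
          simp only [Pi.add_apply, h1, h2, Finset.sum_range_succ]
    have hsmul := Lp.coeFn_smul ((N:ℝ)⁻¹) (∑ n ∈ Finset.range N, (⇑U)^[n] ψL)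
    have hrw : birkhoffAverage ℝ (⇑U) _root_.id N ψL =
        ((N:ℝ)⁻¹) • (∑ n ∈ Finset.range N, (⇑U)^[n] ψL) := by
      simp [birkhoffAverage, birkhoffSum]
    rw [hrw]
    refine hsmul.trans ?_
    filter_upwards [hsum] with x hx
    simp only [Pi.smul_apply, hx, birkhoffAverage, birkhoffSum, smul_eq_mul]
  -- the fixed point property of φL
  have hUφ : U φL = φL := by
    refine Lp.ext ?_
    refine (hUapp φL).trans ?_
    have h1 : ⇑φL ∘ f =ᵐ[μ] φ ∘ f := hf.quasiMeasurePreserving.ae_eq_comp (hφ2.coeFn_toLp)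
    exact (h1.trans hinv).trans (hφ2.coeFn_toLp).symm
  -- mean ergodic theorem
  obtain ⟨gL, hmean'⟩ : ∃ gL : Lp ℝ 2 μ,
      Tendsto (fun N => birkhoffAverage ℝ (⇑U) _root_.id N ψL) atTop (𝓝 gL) :=
    ⟨_, U.tendsto_birkhoffAverage_orthogonalProjection hUnorm ψL⟩
  -- norm estimate
  have hnorm : ‖gL - φL‖ ≤ ‖ψL - φL‖ := by
    have hUφ' : Function.IsFixedPt (⇑U) φL := hUφ
    have hAfix : ∀ N : ℕ, N ≠ 0 → birkhoffAverage ℝ (⇑U) _root_.id N φL = φL := fun N hN =>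
      hUφ'.birkhoffAverage_eq ℝ _root_.id (Nat.cast_ne_zero.mpr hN)
    have hAbound : ∀ N : ℕ, N ≠ 0 →
        ‖birkhoffAverage ℝ (⇑U) _root_.id N ψL - φL‖ ≤ ‖ψL - φL‖ := by
      intro N hN
      have hiter_sub : ∀ (k : ℕ) (v w : Lp ℝ 2 μ), (⇑U)^[k] (v - w) = (⇑U)^[k] v - (⇑U)^[k] w :=
        fun k v w => iterate_map_sub (U : Lp ℝ 2 μ →+ Lp ℝ 2 μ) k v w
      have hiter_norm : ∀ (k : ℕ) (v : Lp ℝ 2 μ), ‖(⇑U)^[k] v‖ = ‖v‖ := by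
        intro k
        induction k with
        | zero => simp
        | succ k ih =>
            intro v
            rw [Function.iterate_succ_apply]
            rw [ih (U v), hUisom v]
      have hsub : birkhoffAverage ℝ (⇑U) _root_.id N ψL - φL =
          birkhoffAverage ℝ (⇑U) _root_.id N (ψL - φL) := by
        conv_lhs => rw [← hAfix N hN]
        simp only [birkhoffAverage, birkhoffSum, _root_.id]
        rw [← smul_sub, ← Finset.sum_sub_distrib]
        congr 1
        exact Finset.sum_congr rfl fun k _ => (hiter_sub k ψL φL).symm
      rw [hsub]
      calc ‖birkhoffAverage ℝ (⇑U) _root_.id N (ψL - φL)‖ ≤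
          |((N:ℝ))⁻¹| * ∑ k ∈ Finset.range N, ‖(⇑U)^[k] (ψL - φL)‖ := by
            rw [birkhoffAverage, norm_smul, Real.norm_eq_abs]
            exact mul_le_mul_of_nonneg_left (norm_sum_le _ _) (abs_nonneg _)
        _ = ((N:ℝ))⁻¹ * (N * ‖ψL - φL‖) := by
            rw [abs_of_nonneg (by positivity)]
            congr 1
            rw [Finset.sum_congr rfl fun k _ => hiter_norm k (ψL - φL)]
            simp [Finset.sum_const, Finset.card_range, mul_comm]
        _ = ‖ψL - φL‖ := by
            have hN' : (N:ℝ) ≠ 0 := Nat.cast_ne_zero.mpr hN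
            field_simp
    have htends : Tendsto (fun N => ‖birkhoffAverage ℝ (⇑U) _root_.id N ψL - φL‖) atTop
        (𝓝 ‖gL - φL‖) := ((hmean'.sub tendsto_const_nhds).norm)
    refine le_of_tendsto htends ?_
    filter_upwards [eventually_ne_atTop 0] with N hN using hAbound N hN
  -- translate the norm bound to eLpNorm
  have hnorm' : eLpNorm (⇑gL - φ) 2 μ ≤ eLpNorm (ψ - φ) 2 μ := by
    have h1 : eLpNorm (⇑gL - φ) 2 μ = eLpNorm (⇑(gL - φL)) 2 μ := by
      refine eLpNorm_congr_ae ?_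
      filter_upwards [Lp.coeFn_sub gL φL, hφ2.coeFn_toLp] with x ha hb
      rw [Pi.sub_apply, ha, Pi.sub_apply, hφL_def, hb]
    have h2 : eLpNorm (ψ - φ) 2 μ = eLpNorm (⇑(ψL - φL)) 2 μ := by
      refine eLpNorm_congr_ae ?_
      filter_upwards [Lp.coeFn_sub ψL φL, hφ2.coeFn_toLp, hψ2.coeFn_toLp] with x ha hb hc
      rw [Pi.sub_apply, ha, Pi.sub_apply, hφL_def, hb, hψL_def, hc]
    rw [h1, h2, ← ENNReal.toReal_le_toReal (Lp.eLpNorm_ne_top _) (Lp.eLpNorm_ne_top _)]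
    simpa [Lp.norm_def] using hnorm
  -- subsequence along which the Birkhoff averages converge a.e.
  have hLp0 : Tendsto
      (fun N => eLpNorm (⇑(birkhoffAverage ℝ (⇑U) _root_.id N ψL) - ⇑gL) 2 μ) atTop (𝓝 0) := by
    rw [← Lp.tendsto_Lp_iff_tendsto_eLpNorm']
    exact hmean'
  have hinM : TendstoInMeasure μ (fun N => ⇑(birkhoffAverage ℝ (⇑U) _root_.id N ψL)) atTop ⇑gL :=
    tendstoInMeasure_of_tendsto_eLpNorm (by norm_num)
      (fun N => Lp.aestronglyMeasurable _) (Lp.aestronglyMeasurable _) hLp0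
  obtain ⟨ns, hns, hae⟩ := hinM.exists_seq_tendsto_ae
  -- the saturation set
  set S : Set X := {x | Tendsto (fun j => birkhoffAverage ℝ f ψ (ns j) x) atTop (𝓝 (gL x))}
    with hS_def
  have hSae : ∀ᵐ x ∂μ, x ∈ S := by
    filter_upwards [hae, ae_all_iff.mpr hbirk] with x h1 h2
    exact h1.congr fun j => h2 (ns j)
  -- saturation property
  have hsat : ∀ x ∈ S, ∀ y ∈ S, y ∈ Wss f x → (⇑gL) x = (⇑gL) y := by
    intro x hx y hy hxy
    have hdiff : Tendsto
        (fun N => birkhoffAverage ℝ f ψ N x - birkhoffAverage ℝ f ψ N y) atTop (𝓝 0) := by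
      have hu : Tendsto (fun n : ℕ => (K:ℝ) * dist (f^[n] x) (f^[n] y)) atTop (𝓝 0) := by
        have := (tendsto_const_nhds (x := (K:ℝ)) (f := atTop (α := ℕ))).mul hxy
        simpa using this
      have hc := hu.cesaro
      have hb : ∀ N : ℕ, |birkhoffAverage ℝ f ψ N x - birkhoffAverage ℝ f ψ N y| ≤
          (N:ℝ)⁻¹ * ∑ k ∈ Finset.range N, (K:ℝ) * dist (f^[k] x) (f^[k] y) := by
        intro N
        have h1 : birkhoffAverage ℝ f ψ N x - birkhoffAverage ℝ f ψ N y =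
            (N:ℝ)⁻¹ * ∑ k ∈ Finset.range N, (ψ (f^[k] x) - ψ (f^[k] y)) := by
          simp only [birkhoffAverage, birkhoffSum, smul_eq_mul, Finset.sum_sub_distrib, mul_sub]
        rw [h1, abs_mul, abs_of_nonneg (inv_nonneg.mpr (Nat.cast_nonneg N))]
        refine mul_le_mul_of_nonneg_left ?_ (inv_nonneg.mpr (Nat.cast_nonneg N))
        refine (Finset.abs_sum_le_sum_abs _ _).trans ?_
        refine Finset.sum_le_sum fun k _ => ?_
        have hd := hψl.dist_le_mul (f^[k] x) (f^[k] y)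
        simpa [Real.dist_eq] using hd
      have habs : Tendsto
          (fun N => |birkhoffAverage ℝ f ψ N x - birkhoffAverage ℝ f ψ N y|) atTop (𝓝 0) :=
        squeeze_zero (fun N => abs_nonneg _) hb hc
      exact (tendsto_zero_iff_abs_tendsto_zero _).mpr habs
    have h1 : Tendsto (fun j => birkhoffAverage ℝ f ψ (ns j) x -
        birkhoffAverage ℝ f ψ (ns j) y) atTop (𝓝 0) := hdiff.comp hns.tendsto_atTop
    have h2 : Tendsto (fun j => birkhoffAverage ℝ f ψ (ns j) x -
        birkhoffAverage ℝ f ψ (ns j) y) atTop (𝓝 (gL x - gL y)) := hx.sub hy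
    exact sub_eq_zero.mp (tendsto_nhds_unique h2 h1)
  exact ⟨⇑gL, Lp.aestronglyMeasurable gL, ⟨S, hSae, hsat⟩, hnorm'⟩


/-- One-sided Hopf argument: an invariant `L²` function is saturated with respect to
the stable partition. -/
lemma hopf_one_sided (f : X → X) (hf : MeasurePreserving f μ μ)
    (φ : X → ℝ) (hφ2 : MemLp φ 2 μ) (hinv : φ ∘ f =ᵐ[μ] φ) :
    Saturated μ (Wss f) φ := by
  have H : ∀ k : ℕ, ∃ g : X → ℝ, AEStronglyMeasurable g μ ∧
      (∃ S : Set X, (∀ᵐ x ∂μ, x ∈ S) ∧ ∀ x ∈ S, ∀ y ∈ S, y ∈ Wss f x → g x = g y) ∧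
      eLpNorm (g - φ) 2 μ ≤ (2:ℝ≥0∞)⁻¹ ^ k := by
    intro k
    have hεne : ((2:ℝ≥0∞)⁻¹ ^ k) ≠ 0 := by
      refine pow_ne_zero _ ?_
      simp
    obtain ⟨ψ, ⟨K, hK⟩, hψ2, hψerr⟩ := memℒp_lipschitz_approx hφ2 hεne
    obtain ⟨g, hgm, hsat, hgnorm⟩ := hopf_key f hf φ hφ2 hinv ψ K hK hψ2
    refine ⟨g, hgm, hsat, hgnorm.trans ?_⟩
    calc eLpNorm (ψ - φ) 2 μ = eLpNorm (φ - ψ) 2 μ := by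
          rw [← neg_sub φ ψ, eLpNorm_neg]
      _ ≤ _ := hψerr.le
  choose g hgm hsat hgnorm using H
  choose S hSae hSsat using hsat
  have htend : Tendsto (fun k => eLpNorm (g k - φ) 2 μ) atTop (𝓝 0) := by
    have hpow : Tendsto (fun k : ℕ => (2:ℝ≥0∞)⁻¹ ^ k) atTop (𝓝 0) := by
      refine ENNReal.tendsto_pow_atTop_nhds_zero_of_lt_one ?_
      rw [ENNReal.inv_lt_one]
      exact ENNReal.one_lt_two
    exact tendsto_of_tendsto_of_tendsto_of_le_of_le tendsto_const_nhds hpow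
      (fun k => zero_le) hgnorm
  have hinM : TendstoInMeasure μ (fun k => g k) atTop φ :=
    tendstoInMeasure_of_tendsto_eLpNorm (by norm_num) hgm hφ2.aestronglyMeasurable htend
  obtain ⟨ks, hks, hae⟩ := hinM.exists_seq_tendsto_ae
  set G0 : Set X := {x | (∀ j, x ∈ S (ks j)) ∧ Tendsto (fun j => g (ks j) x) atTop (𝓝 (φ x))}
    with hG0_def
  have hG0 : ∀ᵐ x ∂μ, x ∈ G0 := by
    filter_upwards [hae, ae_all_iff.mpr (fun j => hSae (ks j))] with x h1 h2
    exact ⟨h2, h1⟩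
  have hG0c : μ G0ᶜ = 0 := by
    exact hG0
  have hGsub : (toMeasurable μ G0ᶜ)ᶜ ⊆ G0 := by
    have h := compl_subset_compl.mpr (subset_toMeasurable μ G0ᶜ)
    rwa [compl_compl] at h
  refine ⟨(toMeasurable μ G0ᶜ)ᶜ, (measurableSet_toMeasurable μ _).compl, ?_, ?_⟩
  · have h1 : μ (toMeasurable μ G0ᶜ) = 0 := by rw [measure_toMeasurable]; exact hG0c
    have h2 := measure_add_measure_compl (μ := μ) ((measurableSet_toMeasurable μ G0ᶜ).compl)
    rw [compl_compl, h1, measure_univ, add_zero] at h2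
    exact h2
  · intro x hx y hy hxy
    obtain ⟨hxS, hxT⟩ := hGsub hx
    obtain ⟨hyS, hyT⟩ := hGsub hy
    have heq : ∀ j, g (ks j) x = g (ks j) y := fun j =>
      hSsat (ks j) x (hxS j) y (hyS j) hxy
    exact tendsto_nhds_unique (hxT.congr heq) hyT

end HopfAux

/-- For an invertible measure-preserving map, any `f`-invariant `φ ∈ L²(μ)` is both
`W^ss`- and `W^su`-saturated (the unstable set being the stable set of the inverse). -/
theorem hopf_argument_two_sided {X : Type*} [MetricSpace X] [MeasurableSpace X] [BorelSpace X]
    (μ : Measure X) [IsProbabilityMeasure μ]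
    (f finv : X → X) (hf : MeasurePreserving f μ μ) (hfinv : MeasurePreserving finv μ μ)
    (hli : Function.LeftInverse finv f) (hri : Function.RightInverse finv f)
    (φ : X → ℝ) (hφm : Measurable φ) (hφ2 : MemLp φ 2 μ)
    (hinvariant : φ ∘ f =ᵐ[μ] φ) :
    Saturated μ (Wss f) φ ∧ Saturated μ (Wss finv) φ := by
  have hinv2 : φ ∘ finv =ᵐ[μ] φ := by
    have h1 : (φ ∘ f) ∘ finv =ᵐ[μ] φ ∘ finv :=
      hfinv.quasiMeasurePreserving.ae_eq_comp hinvariant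
    have h2 : (φ ∘ f) ∘ finv = φ := by
      funext x
      simp [Function.comp_apply, hri x]
    rw [h2] at h1
    exact h1.symm
  exact ⟨hopf_one_sided f hf φ hφ2 hinvariant, hopf_one_sided finv hfinv φ hφ2 hinv2⟩
end

section
/- Let (X, d) be a metric space with a Borel probability measure μ and let f : X → X be an invertible Borel measurable μ-preserving map whose inverse is also Borel measurable and μ-preserving. If W^ss and W^su are jointly ergodic, then f is totally ergodic, i.e. fⁿ is ergodic for every integer n ≥ 1. -/
set_option linter.unusedSectionVars false
set_option synthInstance.maxHeartbeats 1000000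
set_option maxHeartbeats 1000000

open MeasureTheory Filter Topology
open scoped ENNReal

/-- Two partitions `Ws`, `Wu` are jointly ergodic if every `φ ∈ L²(μ)` saturated with
respect to both of them is constant a.e. -/
def JointlyErgodic {X : Type*} [MeasurableSpace X] (μ : Measure X)
    (Ws Wu : X → Set X) : Prop :=
  ∀ φ : X → ℝ, Measurable φ → MemLp φ 2 μ →
    Saturated μ Ws φ → Saturated μ Wu φ → ∃ c : ℝ, φ =ᵐ[μ] fun _ => c

/-- `f` is ergodic: every measurable a.e.-invariant function is constant a.e. -/
def ErgodicMap {X : Type*} [MeasurableSpace X] (μ : Measure X) (f : X → X) : Prop :=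
  ∀ φ : X → ℝ, Measurable φ → φ ∘ f =ᵐ[μ] φ → ∃ c : ℝ, φ =ᵐ[μ] fun _ => c

section Aux

variable {X : Type*} [MetricSpace X] [MeasurableSpace X] [BorelSpace X]
variable {μ : Measure X} [IsProbabilityMeasure μ]

/-- The Koopman operator on `L²`. -/
noncomputable def koopman (g : X → X) (hg : MeasurePreserving g μ μ) :
    Lp ℝ 2 μ →L[ℝ] Lp ℝ 2 μ where
  toFun := Lp.compMeasurePreserving g hg
  map_add' := map_add _
  map_smul' := by
    intro c F
    apply Lp.ext
    filter_upwards [Lp.coeFn_compMeasurePreserving (c • F) hg,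
      hg.quasiMeasurePreserving.ae_eq_comp (Lp.coeFn_smul c F),
      Lp.coeFn_smul c (Lp.compMeasurePreserving g hg F),
      Lp.coeFn_compMeasurePreserving F hg] with x h1 h2 h3 h4
    simp only [Function.comp_apply, Pi.smul_apply, smul_eq_mul, RingHom.id_apply] at h1 h2 h3 h4 ⊢
    rw [h1, h2, h3, h4]
  cont := (Lp.isometry_compMeasurePreserving hg).continuous

theorem koopman_pow_ae (g : X → X) (hg : MeasurePreserving g μ μ) {u : X → ℝ} {F : Lp ℝ 2 μ}
    (hF : ⇑F =ᵐ[μ] u) (k : ℕ) : ⇑((⇑(koopman g hg))^[k] F) =ᵐ[μ] u ∘ g^[k] := by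
  induction k with
  | zero => simpa using hF
  | succ k ih =>
    rw [Function.iterate_succ_apply']
    have h1 : ⇑(koopman g hg ((⇑(koopman g hg))^[k] F)) =ᵐ[μ] ⇑((⇑(koopman g hg))^[k] F) ∘ g :=
      Lp.coeFn_compMeasurePreserving _ hg
    have h2 : ⇑((⇑(koopman g hg))^[k] F) ∘ g =ᵐ[μ] (u ∘ g^[k]) ∘ g :=
      hg.quasiMeasurePreserving.ae_eq_comp ih
    refine (h1.trans h2).trans ?_
    rw [Function.comp_assoc, ← Function.iterate_succ]

theorem birkhoff_ae (g : X → X) (hg : MeasurePreserving g μ μ) {u : X → ℝ} {F : Lp ℝ 2 μ}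
    (hF : ⇑F =ᵐ[μ] u) (N : ℕ) :
    ⇑(birkhoffAverage ℝ (⇑(koopman g hg)) _root_.id N F) =ᵐ[μ]
      fun x => (N : ℝ)⁻¹ • ∑ k ∈ Finset.range N, u (g^[k] x) := by
  have hsum : ⇑(birkhoffSum (⇑(koopman g hg)) _root_.id N F) =ᵐ[μ]
      fun x => ∑ k ∈ Finset.range N, u (g^[k] x) := by
    induction N with
    | zero =>
      rw [birkhoffSum_zero']
      filter_upwards [Lp.coeFn_zero (E := ℝ) (p := 2) (μ := μ)] with x hx
      simp only [Finset.range_zero, Finset.sum_empty]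
      simpa using hx
    | succ N ih =>
      have hadd : ⇑(birkhoffSum (⇑(koopman g hg)) _root_.id N F + (⇑(koopman g hg))^[N] F)
          =ᵐ[μ] ⇑(birkhoffSum (⇑(koopman g hg)) _root_.id N F) + ⇑((⇑(koopman g hg))^[N] F) :=
        Lp.coeFn_add _ _
      have := koopman_pow_ae g hg hF N
      filter_upwards [hadd, ih, this] with x ha hi hk
      simp only [birkhoffSum_succ, _root_.id]
      rw [ha]
      simp only [Pi.add_apply, Finset.sum_range_succ, hi, hk, Function.comp_apply]
  have hsmul := Lp.coeFn_smul ((N : ℝ)⁻¹) (birkhoffSum (⇑(koopman g hg)) _root_.id N F)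
  have : birkhoffAverage ℝ (⇑(koopman g hg)) _root_.id N F
      = (N : ℝ)⁻¹ • birkhoffSum (⇑(koopman g hg)) _root_.id N F := rfl
  rw [this]
  filter_upwards [hsmul, hsum] with x h1 h2
  simp only [Pi.smul_apply] at h1 ⊢
  rw [h1, h2]

theorem eLpNorm_coe_le_coe {F G : Lp ℝ 2 μ} (h : ‖F‖ ≤ ‖G‖) :
    eLpNorm (⇑F) 2 μ ≤ eLpNorm (⇑G) 2 μ := by
  rw [← ENNReal.ofReal_toReal (Lp.eLpNorm_ne_top F), ← ENNReal.ofReal_toReal (Lp.eLpNorm_ne_top G)]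
  exact ENNReal.ofReal_le_ofReal (by rw [← Lp.norm_def, ← Lp.norm_def]; exact h)

theorem step_A {g : X → X} (hg : MeasurePreserving g μ μ)
    {ψ : X → ℝ} (hψ2 : MemLp ψ 2 μ) (hinv : ψ ∘ g =ᵐ[μ] ψ)
    {u : X → ℝ} (huc : UniformContinuous u) (hu2 : MemLp u 2 μ) :
    ∃ v : X → ℝ, Measurable v ∧
      (∃ G, MeasurableSet G ∧ μ G = 1 ∧ ∀ x ∈ G, ∀ y ∈ G, y ∈ Wss g x → v x = v y) ∧
      eLpNorm (fun x => v x - ψ x) 2 μ ≤ eLpNorm (fun x => u x - ψ x) 2 μ := by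
  set T := koopman g hg with hT
  set K := T.eqLocus (1 : Lp ℝ 2 μ →L[ℝ] Lp ℝ 2 μ) with hK
  set U := hu2.toLp u with hU
  set ψL := hψ2.toLp ψ with hψL
  have hψK : ψL ∈ K := by
    have : T ψL = ψL := by
      apply Lp.ext
      calc ⇑(T ψL) =ᵐ[μ] ⇑ψL ∘ g := Lp.coeFn_compMeasurePreserving _ hg
        _ =ᵐ[μ] ψ ∘ g := hg.quasiMeasurePreserving.ae_eq_comp (hψ2.coeFn_toLp)
        _ =ᵐ[μ] ψ := hinv
        _ =ᵐ[μ] ⇑ψL := (hψ2.coeFn_toLp).symm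
    exact LinearMap.mem_eqLocus.2 this
  set PU : Lp ℝ 2 μ := ↑(K.orthogonalProjectionOnto U) with hPU
  set v : X → ℝ := ⇑PU with hv
  have hvmeas : Measurable v := (Lp.stronglyMeasurable PU).measurable
  have hTnorm : ‖T‖ ≤ 1 :=
    ContinuousLinearMap.opNorm_le_bound _ zero_le_one fun F => by
      rw [one_mul]; exact le_of_eq (Lp.norm_compMeasurePreserving F hg)
  have hmet : Tendsto (birkhoffAverage ℝ T _root_.id · U) atTop (𝓝 PU) :=
    T.tendsto_birkhoffAverage_orthogonalProjection hTnorm U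
  have htm : TendstoInMeasure μ (fun N => ⇑(birkhoffAverage ℝ T _root_.id N U)) atTop v :=
    tendstoInMeasure_of_tendsto_Lp hmet
  obtain ⟨ns, hns_mono, hae⟩ := htm.exists_seq_tendsto_ae
  set B : ℕ → X → ℝ := fun N x => (N : ℝ)⁻¹ • ∑ k ∈ Finset.range N, u (g^[k] x) with hB
  have hBmeas : ∀ N, Measurable (B N) := by
    intro N
    show Measurable fun x => (N : ℝ)⁻¹ • ∑ k ∈ Finset.range N, u (g^[k] x)
    simp only [smul_eq_mul]
    exact (Finset.measurable_sum _ fun k _ =>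
      (huc.continuous.measurable).comp (hg.measurable.iterate k)).const_mul _
  have hBeq : ∀ N, ⇑(birkhoffAverage ℝ (⇑T) _root_.id N U) =ᵐ[μ] B N := fun N =>
    birkhoff_ae g hg hu2.coeFn_toLp N
  have hae2 : ∀ᵐ x ∂μ, Tendsto (fun i => B (ns i) x) atTop (𝓝 (v x)) := by
    have hall : ∀ᵐ x ∂μ, ∀ i, ⇑(birkhoffAverage ℝ (⇑T) _root_.id (ns i) U) x = B (ns i) x :=
      (ae_all_iff).2 fun i => hBeq (ns i)
    filter_upwards [hae, hall] with x hx hx2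
    exact hx.congr fun i => hx2 i
  set G := {x | Tendsto (fun i => B (ns i) x) atTop (𝓝 (v x))} with hG
  have hGmeas : MeasurableSet G := measurableSet_tendsto_fun (fun i => hBmeas (ns i)) hvmeas
  have hG1 : μ G = 1 := by
    have h0 : μ Gᶜ = 0 := by simpa [hG, ae_iff, Set.compl_setOf] using hae2
    have := measure_add_measure_compl (μ := μ) hGmeas
    rwa [h0, add_zero, measure_univ] at this
  refine ⟨v, hvmeas, ⟨G, hGmeas, hG1, ?_⟩, ?_⟩
  · intro x hx y hy hxy
    have ha : Tendsto (fun k : ℕ => u (g^[k] x) - u (g^[k] y)) atTop (𝓝 0) := by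
      rw [Metric.tendsto_atTop]
      intro ε hε
      obtain ⟨δ, hδ, hδ'⟩ := Metric.uniformContinuous_iff.mp huc ε hε
      obtain ⟨N, hN⟩ := (Metric.tendsto_atTop.mp hxy) δ hδ
      refine ⟨N, fun n hn => ?_⟩
      have h1 : dist (g^[n] x) (g^[n] y) < δ := by
        have := hN n hn
        rwa [Real.dist_eq, sub_zero, abs_of_nonneg dist_nonneg] at this
      have := hδ' h1
      rwa [Real.dist_eq, sub_zero, ← Real.dist_eq]
    have hc := ha.cesaro
    have hdiff : Tendsto (fun N => B N x - B N y) atTop (𝓝 0) := by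
      refine hc.congr fun N => ?_
      simp only [hB, smul_eq_mul, Finset.sum_sub_distrib, mul_sub]
    have hsub : Tendsto (fun i => B (ns i) x - B (ns i) y) atTop (𝓝 0) :=
      hdiff.comp hns_mono.tendsto_atTop
    have hx' : Tendsto (fun i => B (ns i) x) atTop (𝓝 (v x)) := hx
    have hy' : Tendsto (fun i => B (ns i) y) atTop (𝓝 (v y)) := hy
    have : Tendsto (fun i => B (ns i) x) atTop (𝓝 (v y)) := by
      have := hy'.add hsub
      rw [add_zero] at this
      exact this.congr fun i => by ring
    exact tendsto_nhds_unique hx' this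
  · have h1 : (fun x => v x - ψ x) =ᵐ[μ] ⇑(PU - ψL) := by
      filter_upwards [Lp.coeFn_sub PU ψL, hψ2.coeFn_toLp] with x hx hx2
      rw [hx]; simp [hv, hψL, hx2]
    have h2 : (fun x => u x - ψ x) =ᵐ[μ] ⇑(U - ψL) := by
      filter_upwards [Lp.coeFn_sub U ψL, hψ2.coeFn_toLp, hu2.coeFn_toLp] with x hx hx2 hx3
      rw [hx]; simp [hψL, hU, hx2, hx3]
    rw [eLpNorm_congr_ae h1, eLpNorm_congr_ae h2]
    apply eLpNorm_coe_le_coe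
    have hPψ : (K.orthogonalProjectionOnto ψL : Lp ℝ 2 μ) = ψL :=
      Submodule.starProjection_eq_self_iff.mpr hψK
    have heq : PU - ψL = ↑(K.orthogonalProjectionOnto (U - ψL)) := by
      rw [map_sub, Submodule.coe_sub, hPψ, hPU]
    rw [heq]
    calc ‖(K.orthogonalProjectionOnto (U - ψL) : Lp ℝ 2 μ)‖
        = ‖K.orthogonalProjectionOnto (U - ψL)‖ := by rw [Submodule.norm_coe]
      _ ≤ ‖K.orthogonalProjectionOnto‖ * ‖U - ψL‖ := K.orthogonalProjectionOnto.le_opNorm _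
      _ ≤ 1 * ‖U - ψL‖ :=
          mul_le_mul_of_nonneg_right (Submodule.orthogonalProjectionOnto_norm_le K) (norm_nonneg _)
      _ = ‖U - ψL‖ := one_mul _

theorem lipschitz_const_mul (b : ℝ) : LipschitzWith (Real.nnabs b) (fun t : ℝ => b * t) := by
  refine LipschitzWith.of_dist_le_mul fun x y => ?_
  rw [Real.dist_eq, Real.dist_eq, ← mul_sub, abs_mul]
  exact le_of_eq (by simp [Real.coe_nnabs])

/-- Density of uniformly continuous functions in `L²`. -/
theorem exists_uc_close (ψ : X → ℝ) (hψ2 : MemLp ψ 2 μ) {ε : ℝ≥0∞} (hε : ε ≠ 0) :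
    ∃ u : X → ℝ, UniformContinuous u ∧ MemLp u 2 μ ∧
      eLpNorm (fun x => u x - ψ x) 2 μ ≤ ε := by
  have h2top : (2 : ℝ≥0∞) ≠ ∞ := by norm_num
  have key := hψ2.induction_dense h2top
    (fun u => UniformContinuous u ∧ MemLp u 2 μ) ?_ ?_ ?_ hε
  · obtain ⟨u, hu, huc, hu2⟩ := key
    refine ⟨u, huc, hu2, ?_⟩
    have : (fun x => u x - ψ x) =ᵐ[μ] -(ψ - u) := by
      filter_upwards with x
      simp
    rw [eLpNorm_congr_ae this, eLpNorm_neg]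
    exact hu
  · -- approximation of indicators
    intro c s hs hμs ε' hε'
    obtain ⟨η, ηpos, hη⟩ := exists_eLpNorm_indicator_le (μ := μ) h2top c
      (ENNReal.half_pos hε').ne'
    have hη0 : (η : ℝ≥0∞) ≠ 0 := by simpa using ηpos.ne'
    obtain ⟨F, hFs, hFclosed, hFmeas⟩ := hs.exists_isClosed_diff_lt hμs.ne hη0
    have I1 : eLpNorm ((F.indicator fun _ => c) - s.indicator fun _ => c) 2 μ ≤ ε' / 2 := by
      rw [← eLpNorm_neg, neg_sub, ← Set.indicator_sdiff hFs]
      exact hη _ hFmeas.le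
    rcases F.eq_empty_or_nonempty with hFemp | hFne
    · refine ⟨0, ?_, uniformContinuous_const, memLp_const 0⟩
      have : ((0 : X → ℝ) - s.indicator fun _ => c) = -(s.indicator fun _ => c) := by
        ext x; simp
      rw [this, eLpNorm_neg]
      refine le_trans (hη s ?_) (ENNReal.half_le_self)
      rw [hFemp, Set.diff_empty] at hFmeas
      exact hFmeas.le
    · -- get a thickening of small extra measure
      have htend := tendsto_measure_thickening_of_isClosed
        (μ := μ) ⟨1, one_pos, measure_ne_top μ _⟩ hFclosed
      have hlt : μ F < μ F + η := ENNReal.lt_add_right (measure_ne_top μ F) hη0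
      have hev := htend.eventually_lt_const hlt
      obtain ⟨r, hr, hrpos⟩ := (hev.and self_mem_nhdsWithin).exists
      have hrpos' : (0 : ℝ) < r := hrpos
      have hμT : μ (Metric.thickening r F \ F) ≤ η := by
        rw [measure_diff (Metric.self_subset_thickening hrpos' F)
          hFclosed.measurableSet.nullMeasurableSet (measure_ne_top μ F)]
        exact tsub_le_iff_right.2 (by rw [add_comm]; exact hr.le)
      set u : X → ℝ := fun x => c * max (1 - r⁻¹ * Metric.infDist x F) 0 with hu
      have huc : UniformContinuous u := by
        have uc0 : UniformContinuous fun x : X => Metric.infDist x F :=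
          Metric.uniformContinuous_infDist_pt F
        have uc1 : UniformContinuous fun x : X => r⁻¹ * Metric.infDist x F :=
          (lipschitz_const_mul r⁻¹).uniformContinuous.comp uc0
        have uc2 : UniformContinuous fun x : X => 1 - r⁻¹ * Metric.infDist x F :=
          uniformContinuous_const.sub uc1
        have uc3 : UniformContinuous fun x : X => max (1 - r⁻¹ * Metric.infDist x F) 0 :=
          ((LipschitzWith.id.max_const 0).uniformContinuous).comp uc2
        exact (lipschitz_const_mul c).uniformContinuous.comp uc3
      have humem : MemLp u 2 μ := by
        refine MemLp.of_bound huc.continuous.aestronglyMeasurable |c| ?_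
        filter_upwards with x
        rw [hu, Real.norm_eq_abs, abs_mul]
        have h1 : max (1 - r⁻¹ * Metric.infDist x F) 0 ≤ 1 :=
          max_le (by
            have : 0 ≤ r⁻¹ * Metric.infDist x F :=
              mul_nonneg (inv_nonneg.2 hrpos'.le) Metric.infDist_nonneg
            linarith) zero_le_one
        have h2 : |max (1 - r⁻¹ * Metric.infDist x F) 0| = max (1 - r⁻¹ * Metric.infDist x F) 0 :=
          abs_of_nonneg (le_max_right _ _)
        rw [h2]
        exact mul_le_of_le_one_right (abs_nonneg c) h1
      have humax : ∀ x, max (1 - r⁻¹ * Metric.infDist x F) 0 ≤ 1 := by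
        intro x
        refine max_le (by
          have : 0 ≤ r⁻¹ * Metric.infDist x F :=
            mul_nonneg (inv_nonneg.2 hrpos'.le) Metric.infDist_nonneg
          linarith) zero_le_one
      have hbound : ∀ x, ‖(u - F.indicator fun _ => c) x‖ ≤
          ‖(Metric.thickening r F \ F).indicator (fun _ => c) x‖ := by
        intro x
        show ‖u x - F.indicator (fun _ => c) x‖ ≤ _
        by_cases hxF : x ∈ F
        · have hux : u x = c := by
            show c * max (1 - r⁻¹ * Metric.infDist x F) 0 = c
            simp [Metric.infDist_zero_of_mem hxF]
          have : x ∉ Metric.thickening r F \ F := fun h => h.2 hxF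
          rw [hux, Set.indicator_of_mem hxF, Set.indicator_of_notMem this]
          simp
        · by_cases hxT : x ∈ Metric.thickening r F
          · have : x ∈ Metric.thickening r F \ F := ⟨hxT, hxF⟩
            rw [Set.indicator_of_notMem hxF, Set.indicator_of_mem this, sub_zero]
            show ‖c * max (1 - r⁻¹ * Metric.infDist x F) 0‖ ≤ ‖c‖
            rw [Real.norm_eq_abs, Real.norm_eq_abs, abs_mul,
              abs_of_nonneg (le_max_right (1 - r⁻¹ * Metric.infDist x F) 0)]
            exact mul_le_of_le_one_right (abs_nonneg c) (humax x)
          · have hge : r ≤ Metric.infDist x F := by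
              by_contra hlt'
              exact hxT ((Metric.mem_thickening_iff_infDist_lt hFne).2 (lt_of_not_ge hlt'))
            have hux : u x = 0 := by
              show c * max (1 - r⁻¹ * Metric.infDist x F) 0 = 0
              have h1 : (1 : ℝ) ≤ r⁻¹ * Metric.infDist x F := by
                rw [← inv_mul_cancel₀ hrpos'.ne']
                exact mul_le_mul_of_nonneg_left hge (inv_nonneg.2 hrpos'.le)
              have : max (1 - r⁻¹ * Metric.infDist x F) 0 = 0 :=
                max_eq_right (by linarith)
              rw [this, mul_zero]
            have hxT' : x ∉ Metric.thickening r F \ F := fun h => hxT h.1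
            rw [hux, Set.indicator_of_notMem hxF, Set.indicator_of_notMem hxT']
            simp
      have I2 : eLpNorm (u - F.indicator fun _ => c) 2 μ ≤ ε' / 2 :=
        le_trans (eLpNorm_mono hbound) (hη _ hμT)
      refine ⟨u, ?_, huc, humem⟩
      have hsplit : u - (s.indicator fun _ => c) =
          (u - F.indicator fun _ => c) + ((F.indicator fun _ => c) - s.indicator fun _ => c) := by
        rw [sub_add_sub_cancel]
      rw [hsplit]
      refine le_trans (eLpNorm_add_le
        (huc.continuous.aestronglyMeasurable.sub
          (aestronglyMeasurable_const.indicator hFclosed.measurableSet))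
        ((aestronglyMeasurable_const.indicator hFclosed.measurableSet).sub
          (aestronglyMeasurable_const.indicator hs)) one_le_two) ?_
      refine le_trans (add_le_add I2 I1) ?_
      rw [ENNReal.add_halves]
  · rintro f g₂ ⟨hf1, hf2⟩ ⟨hg1, hg2⟩
    exact ⟨hf1.add hg1, hf2.add hg2⟩
  · rintro f ⟨hf1, hf2⟩
    exact hf2.aestronglyMeasurable



theorem compl_null_of_one {A : Set X} (hA : MeasurableSet A) (h1 : μ A = 1) : μ Aᶜ = 0 := by
  have h := measure_add_measure_compl (μ := μ) hA
  rw [h1, measure_univ] at h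
  nth_rewrite 2 [← add_zero (1 : ℝ≥0∞)] at h
  exact (ENNReal.add_right_inj (by norm_num)).1 h

theorem one_of_compl_null {A : Set X} (hA : MeasurableSet A) (h0 : μ Aᶜ = 0) : μ A = 1 := by
  have h := measure_add_measure_compl (μ := μ) hA
  rwa [h0, add_zero, measure_univ] at h

theorem hopf_saturated {g : X → X} (hg : MeasurePreserving g μ μ)
    {ψ : X → ℝ} (hψm : Measurable ψ) (hψ2 : MemLp ψ 2 μ) (hinv : ψ ∘ g =ᵐ[μ] ψ) :
    Saturated μ (Wss g) ψ := by
  have hsel : ∀ m : ℕ, ∃ v : X → ℝ, Measurable v ∧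
      (∃ G, MeasurableSet G ∧ μ G = 1 ∧ ∀ x ∈ G, ∀ y ∈ G, y ∈ Wss g x → v x = v y) ∧
      eLpNorm (fun x => v x - ψ x) 2 μ ≤ ENNReal.ofReal (1 / (m + 1)) := by
    intro m
    have hpos : (0:ℝ) < 1 / (m + 1) := by positivity
    obtain ⟨u, huc, hu2, hule⟩ := exists_uc_close ψ hψ2
      (ε := ENNReal.ofReal (1 / (m + 1))) (by simp only [ne_eq, ENNReal.ofReal_eq_zero, not_le]; positivity)
    obtain ⟨v, hvm, hsat, hle⟩ := step_A hg hψ2 hinv huc hu2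
    exact ⟨v, hvm, hsat, le_trans hle hule⟩
  choose v hvmeas hsat hvle using hsel
  choose G hGmeas hG1 hGsat using hsat
  have htend0 : Tendsto (fun m => eLpNorm (fun x => v m x - ψ x) 2 μ) atTop (𝓝 0) := by
    have hup : Tendsto (fun m : ℕ => ENNReal.ofReal (1 / (m + 1))) atTop (𝓝 0) := by
      have h2 := ENNReal.tendsto_ofReal (tendsto_one_div_add_atTop_nhds_zero_nat)
      simpa using h2
    exact tendsto_of_tendsto_of_tendsto_of_le_of_le tendsto_const_nhds hup
      (fun m => zero_le) hvle
  have htm : TendstoInMeasure μ (fun m => v m) atTop ψ := by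
    refine tendstoInMeasure_of_tendsto_eLpNorm (p := 2) (by norm_num)
      (fun m => (hvmeas m).aestronglyMeasurable) hψ2.aestronglyMeasurable ?_
    exact htend0
  obtain ⟨ms, hms_mono, haev⟩ := htm.exists_seq_tendsto_ae
  set S := {x | Tendsto (fun j => v (ms j) x) atTop (𝓝 (ψ x))} with hS
  have hSmeas : MeasurableSet S := measurableSet_tendsto_fun (fun j => hvmeas (ms j)) hψm
  have hS0 : μ Sᶜ = 0 := by simpa [hS, ae_iff, Set.compl_setOf] using haev
  set Gbig := S ∩ ⋂ j, G (ms j) with hGbig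
  have hGbigmeas : MeasurableSet Gbig :=
    hSmeas.inter (MeasurableSet.iInter fun j => hGmeas (ms j))
  have hGbig1 : μ Gbig = 1 := by
    apply one_of_compl_null hGbigmeas
    rw [hGbig, Set.compl_inter]
    refine measure_union_null hS0 ?_
    rw [Set.compl_iInter]
    exact measure_iUnion_null fun j => compl_null_of_one (hGmeas (ms j)) (hG1 (ms j))
  refine ⟨Gbig, hGbigmeas, hGbig1, ?_⟩
  intro x hx y hy hxy
  have hxS : x ∈ S := hx.1
  have hyS : y ∈ S := hy.1
  have hxG : ∀ j, x ∈ G (ms j) := fun j => Set.mem_iInter.1 hx.2 j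
  have hyG : ∀ j, y ∈ G (ms j) := fun j => Set.mem_iInter.1 hy.2 j
  have heq : ∀ j, v (ms j) x = v (ms j) y := fun j =>
    hGsat (ms j) x (hxG j) y (hyG j) hxy
  have h1 : Tendsto (fun j => v (ms j) x) atTop (𝓝 (ψ x)) := hxS
  have h2 : Tendsto (fun j => v (ms j) x) atTop (𝓝 (ψ y)) :=
    Tendsto.congr (fun j => (heq j).symm) hyS
  exact tendsto_nhds_unique h1 h2

end Aux

/-- If the stable and unstable partitions are jointly ergodic, then `f` is totally ergodic:
`fⁿ` is ergodic for every `n ≥ 1`. -/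
theorem totallyErgodic_of_jointlyErgodic {X : Type*} [MetricSpace X] [MeasurableSpace X] [BorelSpace X]
    (μ : Measure X) [IsProbabilityMeasure μ]
    (f finv : X → X) (hf : MeasurePreserving f μ μ) (hfinv : MeasurePreserving finv μ μ)
    (hli : Function.LeftInverse finv f) (hri : Function.RightInverse finv f)
    (hje : JointlyErgodic μ (Wss f) (Wss finv)) :
    ∀ n : ℕ, 1 ≤ n → ErgodicMap μ (f^[n]) := by
  intro n hn φ hφm hφinv
  have hg : MeasurePreserving (f^[n]) μ μ := hf.iterate n
  have hginv : MeasurePreserving (finv^[n]) μ μ := hfinv.iterate n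
  set ψ : X → ℝ := fun x => Real.arctan (φ x) with hψ
  have hψm : Measurable ψ := Real.continuous_arctan.measurable.comp hφm
  have hψ2 : MemLp ψ 2 μ := by
    refine MemLp.of_bound hψm.aestronglyMeasurable (Real.pi / 2) ?_
    filter_upwards with x
    rw [Real.norm_eq_abs]
    exact (abs_lt.2 ⟨Real.neg_pi_div_two_lt_arctan _, Real.arctan_lt_pi_div_two _⟩).le
  have hψg : ψ ∘ f^[n] =ᵐ[μ] ψ := by
    filter_upwards [hφinv] with x hx
    simp only [hψ, Function.comp_apply] at hx ⊢
    rw [hx]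
  have hψginv : ψ ∘ finv^[n] =ᵐ[μ] ψ := by
    have h1 : (ψ ∘ f^[n]) ∘ finv^[n] =ᵐ[μ] ψ ∘ finv^[n] :=
      hginv.quasiMeasurePreserving.ae_eq_comp hψg
    have h2 : (ψ ∘ f^[n]) ∘ finv^[n] = ψ := by
      funext x
      simp only [Function.comp_apply]
      rw [(hri.iterate n) x]
    rw [h2] at h1
    exact h1.symm
  have hsub : ∀ (h : X → X) (x y : X), y ∈ Wss h x → y ∈ Wss (h^[n]) x := by
    intro h x y hy
    have hmul : Tendsto (fun m : ℕ => n * m) atTop atTop :=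
      tendsto_atTop_mono (fun m => Nat.le_mul_of_pos_left m (by omega)) tendsto_id
    have := hy.comp hmul
    exact this.congr fun m => by
      simp only [Function.comp_apply, ← Function.iterate_mul]
  have hsat1 : Saturated μ (Wss f) ψ := by
    obtain ⟨G, h1, h2, h3⟩ := hopf_saturated hg hψm hψ2 hψg
    exact ⟨G, h1, h2, fun x hx y hy hxy => h3 x hx y hy (hsub f x y hxy)⟩
  have hsat2 : Saturated μ (Wss finv) ψ := by
    obtain ⟨G, h1, h2, h3⟩ := hopf_saturated hginv hψm hψ2 hψginv
    exact ⟨G, h1, h2, fun x hx y hy hxy => h3 x hx y hy (hsub finv x y hxy)⟩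
  obtain ⟨c, hc⟩ := hje ψ hψm hψ2 hsat1 hsat2
  refine ⟨Real.tan c, ?_⟩
  filter_upwards [hc] with x hx
  have : Real.arctan (φ x) = c := hx
  rw [← this, Real.tan_arctan]
end

section
/- Let (X, d) be a metric space with a Borel probability measure μ and let f : X → X be an invertible Borel measurable μ-preserving map whose inverse is also Borel measurable and μ-preserving. If every f-invariant φ ∈ L²(μ) (φ∘f = φ μ-a.e.) that is both W^ss-saturated and W^su-saturated is constant μ-a.e., then f is ergodic. -/
open MeasureTheory Filter Topology
open scoped ENNReal NNReal

set_option maxHeartbeats 2000000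
set_option synthInstance.maxHeartbeats 1000000

section Aux

private lemma lipzero {X : Type*} [MetricSpace X] :
    (∃ K, LipschitzWith K (0:X→ℝ)) ∧ ∃ C, ∀ x, |(0:X→ℝ) x| ≤ C :=
  ⟨⟨0, LipschitzWith.const' (0:ℝ)⟩, 0, fun x => by simp⟩

/-- Bounded Lipschitz functions are dense in `L²` of a finite Borel measure
on a metric space. -/
private lemma exists_lipschitz_approx {X : Type*} [MetricSpace X] [MeasurableSpace X]
    [BorelSpace X]
    (μ : Measure X) [IsFiniteMeasure μ] {ψ : X → ℝ} (hψ : MemLp ψ 2 μ) {ε : ℝ≥0∞} (hε : ε ≠ 0) :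
    ∃ g : X → ℝ, eLpNorm (ψ - g) 2 μ ≤ ε ∧
      (∃ K, LipschitzWith K g) ∧ ∃ C, ∀ x, |g x| ≤ C := by
  classical
  refine hψ.induction_dense (by norm_num)
    (fun g => (∃ K, LipschitzWith K g) ∧ ∃ C, ∀ x, |g x| ≤ C) ?_ ?_ ?_ hε
  · -- indicator approximation
    intro c s hs hμs ε hε
    rcases eq_or_ne c 0 with rfl | hc
    · exact ⟨0, by simp, lipzero⟩
    rcases eq_or_ne ε ∞ with rfl | hεtop
    · exact ⟨0, le_top, lipzero⟩
    set cE : ℝ≥0∞ := (‖c‖₊ : ℝ≥0∞) with hcE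
    have hc0 : cE ≠ 0 := by simp [hcE, hc]
    have hcT : cE ≠ ∞ := ENNReal.coe_ne_top
    set δ : ℝ≥0∞ := (ε / cE) ^ (2:ℝ) with hδdef
    have hδ0 : δ ≠ 0 :=
      (ENNReal.rpow_pos (ENNReal.div_pos hε hcT) (ENNReal.div_lt_top hεtop hc0).ne).ne'
    have hδhalf : δ / 2 ≠ 0 := by
      simp [ENNReal.div_eq_zero_iff, hδ0]
    have key : ∀ D : Set X, MeasurableSet D → μ D ≤ δ →
        eLpNorm (D.indicator fun _ => c) 2 μ ≤ ε := by
      intro D hD hμD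
      rw [eLpNorm_indicator_const hD two_ne_zero ENNReal.ofNat_ne_top]
      have h2 : (1 / (2:ℝ≥0∞).toReal) = (2:ℝ)⁻¹ := by norm_num
      rw [h2]
      calc (‖c‖₊ : ℝ≥0∞) * μ D ^ (2:ℝ)⁻¹ ≤ cE * δ ^ (2:ℝ)⁻¹ :=
            mul_le_mul_right (ENNReal.rpow_le_rpow hμD (by norm_num)) _
        _ = cE * (ε / cE) := by
            rw [hδdef, ← ENNReal.rpow_mul]
            norm_num
        _ = ε := ENNReal.mul_div_cancel hc0 hcT
    obtain ⟨F, hFs, hFclosed, hμsF⟩ := hs.exists_isClosed_diff_lt hμs.ne hδhalf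
    rcases F.eq_empty_or_nonempty with rfl | hFne
    · refine ⟨0, ?_, lipzero⟩
      have : eLpNorm ((0:X→ℝ) - s.indicator fun _ => c) 2 μ
          = eLpNorm (s.indicator fun _ => c) 2 μ := by
        rw [zero_sub, eLpNorm_neg]
      rw [this]
      refine key s hs ?_
      have := hμsF.le
      simpa using this.trans (ENNReal.half_le_self.trans le_rfl)
    · -- main case
      have htm := tendsto_measure_cthickening_of_isClosed
        ⟨1, one_pos, (measure_ne_top μ _)⟩ hFclosed
      have hlt : μ F < μ F + δ/2 := ENNReal.lt_add_right (measure_ne_top μ F) hδhalf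
      have hev : ∀ᶠ r in 𝓝 (0:ℝ), μ (Metric.cthickening r F) < μ F + δ/2 :=
        htm.eventually_lt_const hlt
      obtain ⟨r, hrμ, hr0⟩ :=
        (((hev.filter_mono (nhdsWithin_le_nhds (s := Set.Ioi (0:ℝ)))).and
          self_mem_nhdsWithin)).exists
      set b : X → ℝ := fun x => max 0 (1 - Metric.infDist x F / r) with hbdef
      refine ⟨fun x => c * b x, ?_, ⟨Real.toNNReal (|c| / r), ?_⟩, |c|, ?_⟩
      · -- eLpNorm bound
        set D : Set X := (s \ F) ∪ (Metric.cthickening r F \ F) with hDdef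
        have hD : MeasurableSet D :=
          (hs.diff hFclosed.measurableSet).union
            ((Metric.isClosed_cthickening.measurableSet).diff hFclosed.measurableSet)
        have hb0 : ∀ x, 0 ≤ b x := fun x => le_max_left _ _
        have hb1 : ∀ x, b x ≤ 1 := by
          intro x
          apply max_le zero_le_one
          have : 0 ≤ Metric.infDist x F / r := div_nonneg Metric.infDist_nonneg hr0.le
          linarith
        have hptwise : ∀ x, ‖(fun x => c * b x) x - s.indicator (fun _ => c) x‖
            ≤ ‖D.indicator (fun _ => c) x‖ := by
          intro x
          by_cases hxD : x ∈ D
          · rw [Set.indicator_of_mem hxD]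
            set i : ℝ := s.indicator (fun _ => (1:ℝ)) x with hidef
            have hind : s.indicator (fun _ => c) x = c * i := by
              by_cases hxs : x ∈ s <;> simp [hidef, hxs]
            have hi0 : 0 ≤ i := by by_cases hxs : x ∈ s <;> simp [hidef, hxs]
            have hi1 : i ≤ 1 := by by_cases hxs : x ∈ s <;> simp [hidef, hxs]
            rw [hind, ← mul_sub]
            rw [Real.norm_eq_abs, Real.norm_eq_abs, abs_mul]
            have : |b x - i| ≤ 1 := by
              rw [abs_sub_le_iff]
              constructor <;> [linarith [hb1 x, hi0]; linarith [hb0 x, hi1]]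
            calc |c| * |b x - i| ≤ |c| * 1 :=
                  mul_le_mul_of_nonneg_left this (abs_nonneg c)
              _ = |c| := mul_one _
          · rw [Set.indicator_of_notMem hxD]
            have : c * b x - s.indicator (fun _ => c) x = 0 := by
              by_cases hxF : x ∈ F
              · have hbx : b x = 1 := by
                  simp [hbdef, Metric.infDist_zero_of_mem hxF]
                have hxs : x ∈ s := hFs hxF
                simp [hbx, Set.indicator_of_mem hxs]
              · have hxs : x ∉ s := fun hxs => hxD (Or.inl ⟨hxs, hxF⟩)
                have hxc : x ∉ Metric.cthickening r F := fun hxc => hxD (Or.inr ⟨hxc, hxF⟩)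
                have hrle : r ≤ Metric.infDist x F := by
                  rw [Metric.mem_cthickening_iff, not_le] at hxc
                  have hne : EMetric.infEdist x F ≠ ∞ := Metric.infEdist_ne_top hFne
                  have := (ENNReal.toReal_le_toReal (by simp) hne).mpr hxc.le
                  rwa [ENNReal.toReal_ofReal hr0.le] at this
                have hbx : b x = 0 := by
                  apply max_eq_left
                  have : 1 ≤ Metric.infDist x F / r := (one_le_div hr0).mpr hrle
                  linarith
                simp [hbx, Set.indicator_of_notMem hxs]
            rw [this]
        calc eLpNorm ((fun x => c * b x) - s.indicator fun _ => c) 2 μ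
            ≤ eLpNorm (D.indicator fun _ => c) 2 μ := eLpNorm_mono hptwise
          _ ≤ ε := by
              refine key D hD ?_
              have h1 : μ (s \ F) ≤ δ/2 := hμsF.le
              have h2 : μ (Metric.cthickening r F \ F) ≤ δ/2 := by
                rw [measure_diff (Metric.self_subset_cthickening F)
                  hFclosed.measurableSet.nullMeasurableSet (measure_ne_top μ F)]
                rw [tsub_le_iff_right]
                rw [add_comm]
                exact hrμ.le
              calc μ D ≤ μ (s \ F) + μ (Metric.cthickening r F \ F) := measure_union_le _ _
                _ ≤ δ/2 + δ/2 := add_le_add h1 h2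
                _ = δ := ENNReal.add_halves δ
      · -- Lipschitz
        apply LipschitzWith.of_dist_le_mul
        intro x y
        rw [Real.coe_toNNReal _ (by positivity), Real.dist_eq]
        have hinf : |Metric.infDist x F - Metric.infDist y F| ≤ dist x y := by
          have := (Metric.lipschitz_infDist_pt F).dist_le_mul x y
          rwa [Real.dist_eq, NNReal.coe_one, one_mul] at this
        calc |c * b x - c * b y| = |c| * |b x - b y| := by rw [← mul_sub, abs_mul]
          _ ≤ |c| * (|Metric.infDist x F - Metric.infDist y F| / r) := by
              apply mul_le_mul_of_nonneg_left _ (abs_nonneg c)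
              rw [hbdef]
              simp only [max_comm (0:ℝ)]
              refine (abs_max_sub_max_le_abs _ _ _).trans ?_
              rw [show (1 - Metric.infDist x F / r) - (1 - Metric.infDist y F / r)
                  = -((Metric.infDist x F - Metric.infDist y F) / r) by ring]
              rw [abs_neg, abs_div, abs_of_pos hr0]
          _ ≤ |c| * (dist x y / r) := by
              apply mul_le_mul_of_nonneg_left _ (abs_nonneg c)
              exact div_le_div_of_nonneg_right hinf hr0.le |>.trans_eq rfl
          _ = |c| / r * dist x y := by ring
      · -- bound
        intro x
        have hb0 : 0 ≤ b x := le_max_left _ _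
        have hb1 : b x ≤ 1 := by
          apply max_le zero_le_one
          have : 0 ≤ Metric.infDist x F / r := div_nonneg Metric.infDist_nonneg hr0.le
          linarith
        rw [abs_mul]
        calc |c| * |b x| ≤ |c| * 1 := by
              apply mul_le_mul_of_nonneg_left _ (abs_nonneg c)
              rw [abs_of_nonneg hb0]; exact hb1
          _ = |c| := mul_one _
  · rintro a b ⟨⟨Ka, hKa⟩, Ca, hCa⟩ ⟨⟨Kb, hKb⟩, Cb, hCb⟩
    exact ⟨⟨Ka + Kb, hKa.add hKb⟩, Ca + Cb, fun x =>
      (abs_add_le _ _).trans (add_le_add (hCa x) (hCb x))⟩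
  · rintro g ⟨⟨K, hK⟩, -⟩
    exact hK.continuous.aestronglyMeasurable

/-- Pointwise identification of Birkhoff averages of the Koopman operator. -/
private lemma birkhoff_coeFn {X : Type*} [MetricSpace X] [MeasurableSpace X] [BorelSpace X]
    (μ : Measure X) [IsProbabilityMeasure μ] (f : X → X) (hf : MeasurePreserving f μ μ)
    (w : Lp ℝ 2 μ) (g : X → ℝ) (hwg : ⇑w =ᵐ[μ] g)
    (U : Lp ℝ 2 μ →L[ℝ] Lp ℝ 2 μ)
    (hcoe : ∀ v : Lp ℝ 2 μ, ⇑(U v) =ᵐ[μ] (v : X → ℝ) ∘ f) (N : ℕ) :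
    ⇑(birkhoffAverage ℝ U _root_.id N w) =ᵐ[μ] birkhoffAverage ℝ f g N := by
  have hiter : ∀ n : ℕ, ⇑((⇑U)^[n] w) =ᵐ[μ] g ∘ f^[n] := by
    intro n; induction n with
    | zero => simpa using hwg
    | succ n ih =>
      rw [Function.iterate_succ_apply']
      refine (hcoe _).trans ?_
      have := hf.quasiMeasurePreserving.ae_eq_comp ih
      refine this.trans ?_
      rw [Function.comp_assoc, ← Function.iterate_succ]
  have hsum : ∀ n : ℕ, ⇑(birkhoffSum (⇑U) _root_.id n w) =ᵐ[μ] birkhoffSum f g n := by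
    intro n; induction n with
    | zero => simp [birkhoffSum]; exact Lp.coeFn_zero ℝ 2 μ
    | succ n ih =>
      have h1 : birkhoffSum (⇑U) _root_.id (n+1) w
          = birkhoffSum (⇑U) _root_.id n w + (⇑U)^[n] w := birkhoffSum_succ _ _ _ _
      have h2 : ∀ x, birkhoffSum f g (n+1) x = birkhoffSum f g n x + g (f^[n] x) :=
        fun x => birkhoffSum_succ _ _ _ _
      rw [h1]
      refine (Lp.coeFn_add _ _).trans ?_
      filter_upwards [ih, hiter n] with x h3 h4
      simp only [Pi.add_apply, h2 x, h3, h4]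
      rfl
  have hsm := Lp.coeFn_smul ((N:ℝ)⁻¹) (birkhoffSum (⇑U) _root_.id N w)
  show ⇑((N:ℝ)⁻¹ • birkhoffSum (⇑U) _root_.id N w) =ᵐ[μ] _
  refine hsm.trans ?_
  filter_upwards [hsum N] with x hx
  simp only [Pi.smul_apply, hx]
  rfl

/-- From convergence in `L²` extract an a.e. convergent subsequence of pointwise
representatives. -/
private lemma subseq_ae {X : Type*} [MetricSpace X] [MeasurableSpace X] [BorelSpace X]
    (μ : Measure X) [IsProbabilityMeasure μ]
    (A : ℕ → Lp ℝ 2 μ) (Pw : Lp ℝ 2 μ) (htend : Tendsto A atTop (𝓝 Pw))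
    (F : ℕ → X → ℝ) (hFm : ∀ N, Measurable (F N))
    (hident : ∀ N, ⇑(A N) =ᵐ[μ] F N) :
    ∃ ns : ℕ → ℕ, StrictMono ns ∧
      ∀ᵐ x ∂μ, Tendsto (fun i => F (ns i) x) atTop (𝓝 ((Pw : X → ℝ) x)) := by
  have _inst : Fact ((1:ℝ≥0∞) ≤ 2) := ⟨one_le_two⟩
  have h1 : Tendsto (fun N => eLpNorm (⇑(A N) - ⇑Pw) 2 μ) atTop (𝓝 0) :=
    (Lp.tendsto_Lp_iff_tendsto_eLpNorm' _ _).mp htend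
  have h2 : Tendsto (fun N => eLpNorm (F N - ⇑Pw) 2 μ) atTop (𝓝 0) := by
    refine h1.congr fun N => ?_
    exact eLpNorm_congr_ae ((hident N).sub EventuallyEq.rfl)
  have h3 : TendstoInMeasure μ F atTop ⇑Pw :=
    tendstoInMeasure_of_tendsto_eLpNorm (by norm_num)
      (fun n => (hFm n).aestronglyMeasurable) (Lp.aestronglyMeasurable Pw) h2
  exact h3.exists_seq_tendsto_ae

/-- Birkhoff averages of a Lipschitz function along two orbits whose distance tends
to `0` have vanishing difference. -/
private lemma birkhoff_diff_tendsto {X : Type*} [MetricSpace X]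
    (f : X → X) (g : X → ℝ) (K : ℝ≥0) (hg : LipschitzWith K g) (x y : X)
    (hxy : Tendsto (fun n => dist (f^[n] x) (f^[n] y)) atTop (𝓝 0)) :
    Tendsto (fun n => birkhoffAverage ℝ f g n x - birkhoffAverage ℝ f g n y) atTop (𝓝 0) := by
  have hu : Tendsto (fun j => g (f^[j] x) - g (f^[j] y)) atTop (𝓝 0) := by
    apply squeeze_zero_norm (fun j => ?_) (by simpa using hxy.const_mul (K:ℝ))
    · show |g (f^[j] x) - g (f^[j] y)| ≤ (K:ℝ) * dist (f^[j] x) (f^[j] y)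
      rw [← Real.dist_eq]
      exact hg.dist_le_mul _ _
  have := hu.cesaro
  refine this.congr fun n => ?_
  simp only [birkhoffAverage, birkhoffSum, smul_eq_mul, Finset.sum_sub_distrib, mul_sub]

private lemma proj_congr {E : Type*} [NormedAddCommGroup E] [InnerProductSpace ℝ E]
    {K₁ K₂ : Submodule ℝ E} (h : K₁ = K₂) [K₁.HasOrthogonalProjection]
    [K₂.HasOrthogonalProjection] (w : E) :
    (K₁.orthogonalProjectionOnto w : E) = (K₂.orthogonalProjectionOnto w : E) := by
  subst h; rfl

end Aux

/-- If every `f`-invariant `φ ∈ L²(μ)` that is both `W^ss`- and `W^su`-saturated is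
constant a.e., then `f` is ergodic. -/
theorem ergodic_of_invariant_bisaturated_const {X : Type*} [MetricSpace X] [MeasurableSpace X]
    [BorelSpace X] (μ : Measure X) [IsProbabilityMeasure μ]
    (f finv : X → X) (hf : MeasurePreserving f μ μ) (hfinv : MeasurePreserving finv μ μ)
    (hli : Function.LeftInverse finv f) (hri : Function.RightInverse finv f)
    (hyp : ∀ φ : X → ℝ, Measurable φ → MemLp φ 2 μ → φ ∘ f =ᵐ[μ] φ →
      Saturated μ (Wss f) φ → Saturated μ (Wss finv) φ → ∃ c : ℝ, φ =ᵐ[μ] fun _ => c) :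
    ErgodicMap μ f := by
  intro φ hφm hφinv
  classical
  have _inst : Fact ((1:ℝ≥0∞) ≤ 2) := ⟨one_le_two⟩
  -- Koopman operators
  set U : Lp ℝ 2 μ →L[ℝ] Lp ℝ 2 μ :=
    (Lp.compMeasurePreservingₗᵢ ℝ f hf).toContinuousLinearMap with hUdef
  set U' : Lp ℝ 2 μ →L[ℝ] Lp ℝ 2 μ :=
    (Lp.compMeasurePreservingₗᵢ ℝ finv hfinv).toContinuousLinearMap with hU'def
  have hUle : ‖U‖ ≤ 1 := LinearIsometry.norm_toContinuousLinearMap_le _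
  have hU'le : ‖U'‖ ≤ 1 := LinearIsometry.norm_toContinuousLinearMap_le _
  have hcoeU : ∀ v : Lp ℝ 2 μ, ⇑(U v) =ᵐ[μ] ⇑v ∘ f :=
    fun v => Lp.coeFn_compMeasurePreserving v hf
  have hcoeU' : ∀ v : Lp ℝ 2 μ, ⇑(U' v) =ᵐ[μ] ⇑v ∘ finv :=
    fun v => Lp.coeFn_compMeasurePreserving v hfinv
  -- fixed subspaces agree
  have heq : U.eqLocus (1 : Lp ℝ 2 μ →L[ℝ] Lp ℝ 2 μ) = U'.eqLocus (1 : Lp ℝ 2 μ →L[ℝ] Lp ℝ 2 μ) := by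
    ext v
    simp only [LinearMap.mem_eqLocus, ContinuousLinearMap.coe_coe, ContinuousLinearMap.one_apply]
    constructor
    · intro hv
      have h1 : U' (U v) = v := by
        apply Lp.ext
        refine (hcoeU' (U v)).trans ?_
        refine (hfinv.quasiMeasurePreserving.ae_eq_comp (hcoeU v)).trans ?_
        have hcc : (⇑v ∘ f) ∘ finv = ⇑v := by
          funext z; simp [Function.comp, hri z]
        rw [hcc]
      calc U' v = U' (U v) := by rw [hv]
        _ = v := h1
    · intro hv
      have h1 : U (U' v) = v := by
        apply Lp.ext
        refine (hcoeU (U' v)).trans ?_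
        refine (hf.quasiMeasurePreserving.ae_eq_comp (hcoeU' v)).trans ?_
        have hcc : (⇑v ∘ finv) ∘ f = ⇑v := by
          funext z; simp [Function.comp, hli z]
        rw [hcc]
      calc U v = U (U' v) := by rw [hv]
        _ = v := h1
  set V := (U : Lp ℝ 2 μ →L[ℝ] Lp ℝ 2 μ).eqLocus (1 : Lp ℝ 2 μ →L[ℝ] Lp ℝ 2 μ) with hVdef
  -- Main claim: the projection of a bounded Lipschitz function onto the invariant
  -- subspace is a.e. constant.
  have main : ∀ (g : X → ℝ) (K : ℝ≥0), LipschitzWith K g → (∃ C, ∀ x, |g x| ≤ C) →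
      ∀ (hgmem : MemLp g 2 μ), ∃ c : ℝ,
        (V.orthogonalProjectionOnto (hgmem.toLp g) : Lp ℝ 2 μ) = (memLp_const c).toLp _ := by
    intro g K hK hgB hgmem
    set w := hgmem.toLp g with hw
    have hwg : ⇑w =ᵐ[μ] g := hgmem.coeFn_toLp
    have hgm : Measurable g := hK.continuous.measurable
    have hFm : ∀ (φ' : X → X), Measurable φ' → ∀ N : ℕ,
        Measurable (birkhoffAverage ℝ φ' g N) := by
      intro φ' hφ' N
      have hbs : Measurable (birkhoffSum φ' g N) := by
        show Measurable fun x => ∑ k ∈ Finset.range N, g (φ'^[k] x)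
        exact Finset.measurable_sum _ fun k _ => hgm.comp (hφ'.iterate k)
      show Measurable fun x => (N:ℝ)⁻¹ * birkhoffSum φ' g N x
      exact hbs.const_mul _
    -- forward convergence
    have htendF := U.tendsto_birkhoffAverage_orthogonalProjection hUle w
    obtain ⟨ns, hns, haeF⟩ := subseq_ae μ _ _ htendF _
      (fun N => hFm f hf.measurable N) (birkhoff_coeFn μ f hf w g hwg U hcoeU)
    -- backward convergence
    have htendB := U'.tendsto_birkhoffAverage_orthogonalProjection hU'le w
    have hproj : ((((U' : Lp ℝ 2 μ →L[ℝ] Lp ℝ 2 μ).eqLocus (1 : Lp ℝ 2 μ →L[ℝ] Lp ℝ 2 μ)).orthogonalProjectionOnto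
          w : Lp ℝ 2 μ))
        = (V.orthogonalProjectionOnto w : Lp ℝ 2 μ) := proj_congr heq.symm w
    rw [hproj] at htendB
    obtain ⟨ms, hms, haeB⟩ := subseq_ae μ _ _ htendB _
      (fun N => hFm finv hfinv.measurable N) (birkhoff_coeFn μ finv hfinv w g hwg U' hcoeU')
    set h : X → ℝ := ⇑(V.orthogonalProjectionOnto w : Lp ℝ 2 μ) with hh
    have hhm : Measurable h := (Lp.stronglyMeasurable _).measurable
    have hhmem : MemLp h 2 μ := Lp.memLp _
    have hPV : ((V.orthogonalProjectionOnto w : Lp ℝ 2 μ)) ∈ V := SetLike.coe_mem _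
    have hUP : U (V.orthogonalProjectionOnto w : Lp ℝ 2 μ)
        = (V.orthogonalProjectionOnto w : Lp ℝ 2 μ) := by
      have := LinearMap.mem_eqLocus.mp hPV
      simpa using this
    have hinvh : h ∘ f =ᵐ[μ] h := by
      have h1 := hcoeU (V.orthogonalProjectionOnto w : Lp ℝ 2 μ)
      rw [hUP] at h1
      exact h1.symm
    -- full measure set of two-sided convergence
    have hae_both := haeF.and haeB
    obtain ⟨t, hSt, htm, htnull⟩ := exists_measurable_superset_of_null (ae_iff.mp hae_both)
    have hGm : MeasurableSet tᶜ := htm.compl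
    have hG1 : μ tᶜ = 1 := by
      rw [measure_compl htm (measure_ne_top μ t), htnull, measure_univ, tsub_zero]
    have hGprop : ∀ x ∈ tᶜ,
        (Tendsto (fun i => birkhoffAverage ℝ f g (ns i) x) atTop (𝓝 (h x))) ∧
        (Tendsto (fun i => birkhoffAverage ℝ finv g (ms i) x) atTop (𝓝 (h x))) := by
      intro x hx
      by_contra hcon
      exact hx (hSt hcon)
    have sat1 : Saturated μ (Wss f) h := by
      refine ⟨tᶜ, hGm, hG1, ?_⟩
      intro x hx y hy hyW
      have hdiff := birkhoff_diff_tendsto f g K hK x y hyW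
      have hx1 := (hGprop x hx).1
      have hy1 := (hGprop y hy).1
      have hsub : Tendsto (fun i => birkhoffAverage ℝ f g (ns i) x
          - birkhoffAverage ℝ f g (ns i) y) atTop (𝓝 0) :=
        hdiff.comp hns.tendsto_atTop
      have hx2 : Tendsto (fun i => birkhoffAverage ℝ f g (ns i) x) atTop (𝓝 (h y)) := by
        have := hy1.add hsub
        rw [add_zero] at this
        refine this.congr fun i => ?_
        ring
      exact tendsto_nhds_unique hx1 hx2
    have sat2 : Saturated μ (Wss finv) h := by
      refine ⟨tᶜ, hGm, hG1, ?_⟩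
      intro x hx y hy hyW
      have hdiff := birkhoff_diff_tendsto finv g K hK x y hyW
      have hx1 := (hGprop x hx).2
      have hy1 := (hGprop y hy).2
      have hsub : Tendsto (fun i => birkhoffAverage ℝ finv g (ms i) x
          - birkhoffAverage ℝ finv g (ms i) y) atTop (𝓝 0) :=
        hdiff.comp hms.tendsto_atTop
      have hx2 : Tendsto (fun i => birkhoffAverage ℝ finv g (ms i) x) atTop (𝓝 (h y)) := by
        have := hy1.add hsub
        rw [add_zero] at this
        refine this.congr fun i => ?_
        ring
      exact tendsto_nhds_unique hx1 hx2
    obtain ⟨c, hc⟩ := hyp h hhm hhmem hinvh sat1 sat2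
    exact ⟨c, Lp.ext (hc.trans ((memLp_const c).coeFn_toLp).symm)⟩
  -- reduce to the bounded invariant function arctan ∘ φ
  set ψ : X → ℝ := fun x => Real.arctan (φ x) with hψdef
  have hψm : Measurable ψ := Real.measurable_arctan.comp hφm
  have hψb : ∀ x, |ψ x| ≤ 2 := by
    intro x
    have h1 := Real.arctan_lt_pi_div_two (φ x)
    have h2 := Real.neg_pi_div_two_lt_arctan (φ x)
    have hpi := Real.pi_lt_d2
    rw [abs_le]
    constructor <;> simp only [hψdef] <;> linarith
  have hψmem : MemLp ψ 2 μ :=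
    MemLp.of_bound hψm.aestronglyMeasurable 2
      (ae_of_all μ fun x => by rw [Real.norm_eq_abs]; exact hψb x)
  have hψinv : ψ ∘ f =ᵐ[μ] ψ := by
    filter_upwards [hφinv] with x hx
    simp only [hψdef, Function.comp_apply] at hx ⊢
    rw [show φ (f x) = φ x from hx]
  set ψL := hψmem.toLp ψ with hψL
  have hψV : ψL ∈ V := by
    rw [hVdef, LinearMap.mem_eqLocus]
    simp only [ContinuousLinearMap.coe_coe, ContinuousLinearMap.one_apply]
    apply Lp.ext
    refine (hcoeU ψL).trans ?_
    refine (hf.quasiMeasurePreserving.ae_eq_comp hψmem.coeFn_toLp).trans ?_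
    exact hψinv.trans hψmem.coeFn_toLp.symm
  set oneL : Lp ℝ 2 μ := (memLp_const (1:ℝ)).toLp (fun _ => (1:ℝ)) with honeL
  have hmemspan : ψL ∈ Submodule.span ℝ {oneL} := by
    have hclosed : IsClosed ((Submodule.span ℝ {oneL} : Submodule ℝ (Lp ℝ 2 μ))
        : Set (Lp ℝ 2 μ)) := Submodule.closed_of_finiteDimensional _
    have : ψL ∈ closure ((Submodule.span ℝ {oneL} : Submodule ℝ (Lp ℝ 2 μ))
        : Set (Lp ℝ 2 μ)) := by
      rw [Metric.mem_closure_iff]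
      intro ε hε
      have hε2 : (ENNReal.ofReal (ε/2)) ≠ 0 := by
        simp only [ne_eq, ENNReal.ofReal_eq_zero, not_le]
        linarith
      obtain ⟨g, hg1, ⟨K, hK⟩, C, hC⟩ := exists_lipschitz_approx μ hψmem hε2
      have hgmem : MemLp g 2 μ :=
        MemLp.of_bound hK.continuous.measurable.aestronglyMeasurable C
          (ae_of_all μ fun x => by rw [Real.norm_eq_abs]; exact hC x)
      obtain ⟨c, hcP⟩ := main g K hK ⟨C, hC⟩ hgmem
      refine ⟨(memLp_const c).toLp _, ?_, ?_⟩
      · -- membership in span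
        have hsm : (memLp_const c).toLp (fun _ => c) = c • oneL := by
          apply Lp.ext
          refine ((memLp_const c).coeFn_toLp).trans ?_
          refine EventuallyEq.trans ?_ (Lp.coeFn_smul c oneL).symm
          filter_upwards [MemLp.coeFn_toLp (μ := μ) (p := 2) (memLp_const (1:ℝ))] with x hx
          simp [honeL, hx]
        rw [SetLike.mem_coe, hsm]
        exact Submodule.smul_mem _ c (Submodule.mem_span_singleton_self oneL)
      · -- distance estimate
        have hψP : (V.orthogonalProjectionOnto ψL : Lp ℝ 2 μ) = ψL :=
          Submodule.starProjection_eq_self_iff.mpr hψV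
        have hnorm : dist ψL ((memLp_const c).toLp _)
            = ‖(V.orthogonalProjectionOnto (ψL - hgmem.toLp g) : Lp ℝ 2 μ)‖ := by
          rw [map_sub, Submodule.coe_sub, hψP, hcP, dist_eq_norm]
        have hb1 : dist ψL ((memLp_const c).toLp _) ≤ ‖ψL - hgmem.toLp g‖ := by
          rw [hnorm]
          calc ‖(V.orthogonalProjectionOnto (ψL - hgmem.toLp g) : Lp ℝ 2 μ)‖
              ≤ ‖V.orthogonalProjectionOnto‖ * ‖ψL - hgmem.toLp g‖ :=
                V.orthogonalProjectionOnto.le_opNorm _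
            _ ≤ 1 * ‖ψL - hgmem.toLp g‖ :=
                mul_le_mul_of_nonneg_right V.orthogonalProjectionOnto_norm_le (norm_nonneg _)
            _ = ‖ψL - hgmem.toLp g‖ := one_mul _
        have hb2 : ‖ψL - hgmem.toLp g‖ ≤ ε/2 := by
          rw [hψL, ← MemLp.toLp_sub hψmem hgmem, Lp.norm_toLp]
          calc (eLpNorm (ψ - g) 2 μ).toReal ≤ (ENNReal.ofReal (ε/2)).toReal :=
                ENNReal.toReal_mono ENNReal.ofReal_ne_top hg1
            _ = ε/2 := ENNReal.toReal_ofReal (by linarith)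
        calc dist ψL ((memLp_const c).toLp _) ≤ ε/2 := hb1.trans hb2
          _ < ε := by linarith
    rwa [hclosed.closure_eq] at this
  obtain ⟨a, ha⟩ := Submodule.mem_span_singleton.mp hmemspan
  have hψconst : ψ =ᵐ[μ] fun _ => a := by
    have h1 : ⇑ψL =ᵐ[μ] ψ := hψmem.coeFn_toLp
    have h2 : ⇑(a • oneL) =ᵐ[μ] fun _ => a := by
      refine (Lp.coeFn_smul a oneL).trans ?_
      filter_upwards [MemLp.coeFn_toLp (μ := μ) (p := 2) (memLp_const (1:ℝ))] with x hx
      simp [honeL, hx]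
    rw [← ha] at h1
    exact h1.symm.trans h2
  have hne : ∃ x₀, ψ x₀ = a := by
    by_contra hcon
    push_neg at hcon
    have h0 : μ {x | ¬ (ψ x = a)} = 0 := ae_iff.mp hψconst
    have huniv : {x : X | ¬ (ψ x = a)} = Set.univ := by
      ext x; simp [hcon x]
    rw [huniv, measure_univ] at h0
    exact one_ne_zero h0
  obtain ⟨x₀, hx₀⟩ := hne
  refine ⟨φ x₀, ?_⟩
  filter_upwards [hψconst] with x hx
  have harc : Real.arctan (φ x) = Real.arctan (φ x₀) := by
    simp only [hψdef] at hx hx₀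
    rw [hx, ← hx₀]
  exact Real.arctan_injective harc
end

section
/- Let (X, d) be a metric space with a Borel probability measure μ, and let T_n : X → X (n ∈ ℕ) be Borel measurable maps such that T_n(x) → x for μ-a.e. x, the pushforward measures (T_n)_*μ are absolutely continuous with respect to μ, and the Radon–Nikodym derivatives g_n = d((T_n)_*μ)/dμ are uniformly integrable (for every ε > 0 there is M such that sup_n ∫_{{g_n > M}} g_n dμ < ε). Then for every bounded measurable φ : X → ℝ one has ∫ |φ∘T_n − φ| dμ → 0 as n → ∞. -/
open MeasureTheory Filter Topology
open scoped ENNReal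

lemma clamp_aux {C a b : ℝ} (h1 : -C ≤ a) (h2 : a ≤ C) :
    |a - max (-C) (min C b)| ≤ |a - b| := by
  have hC : -C ≤ C := h1.trans h2
  rcases le_total b (-C) with hb | hb
  · rw [min_eq_right (hb.trans hC), max_eq_left hb,
      abs_of_nonneg (by linarith), abs_of_nonneg (by linarith)]
    linarith
  · rcases le_total C b with hb' | hb'
    · rw [min_eq_left hb', max_eq_right hC,
        abs_of_nonpos (by linarith), abs_of_nonpos (by linarith)]
      linarith
    · rw [min_eq_right hb', max_eq_right hb]

/-- If `T_n → Id` a.e., the pushforwards `(T_n)_*μ` are absolutely continuous with respect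
to `μ`, and the Radon–Nikodym derivatives `g_n = d((T_n)_*μ)/dμ` are uniformly integrable,
then `∫ |φ∘T_n − φ| dμ → 0` for every bounded measurable `φ`. -/
theorem L1_convergence_of_ae_convergence_uniformIntegrable {X : Type*} [MetricSpace X]
    [MeasurableSpace X] [BorelSpace X] (μ : Measure X) [IsProbabilityMeasure μ]
    (T : ℕ → X → X) (hTm : ∀ n, Measurable (T n))
    (hTconv : ∀ᵐ x ∂μ, Tendsto (fun n => T n x) atTop (nhds x))
    (hac : ∀ n, Measure.map (T n) μ ≪ μ)
    (hui : ∀ ε : ℝ, 0 < ε → ∃ M : ℝ, ∀ n : ℕ,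
      ∫ x in {x | M < ((Measure.map (T n) μ).rnDeriv μ x).toReal},
        ((Measure.map (T n) μ).rnDeriv μ x).toReal ∂μ < ε)
    (φ : X → ℝ) (hφm : Measurable φ) (hφb : ∃ C : ℝ, ∀ x, |φ x| ≤ C) :
    Tendsto (fun n : ℕ => ∫ x, |φ (T n x) - φ x| ∂μ) atTop (nhds 0) := by
  obtain ⟨C₀, hC₀⟩ := hφb
  set C : ℝ := max C₀ 1 with hCdef
  have hC1 : (1:ℝ) ≤ C := le_max_right _ _
  have hCpos : (0:ℝ) < C := lt_of_lt_of_le one_pos hC1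
  have hφC : ∀ x, |φ x| ≤ C := fun x => (hC₀ x).trans (le_max_left _ _)
  have hφint : Integrable φ μ :=
    (integrable_const C).mono' hφm.aestronglyMeasurable
      (ae_of_all _ fun x => by simpa using hφC x)
  -- the Radon-Nikodym densities
  set g : ℕ → X → ℝ := fun n x => ((Measure.map (T n) μ).rnDeriv μ x).toReal with hgdef
  have hgm : ∀ n, Measurable (g n) := fun n =>
    (Measure.measurable_rnDeriv _ _).ennreal_toReal
  have hgnn : ∀ n x, 0 ≤ g n x := fun n x => ENNReal.toReal_nonneg
  have hgint : ∀ n, Integrable (g n) μ := fun n => Measure.integrable_toReal_rnDeriv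
  rw [tendsto_order]
  constructor
  · intro a ha
    filter_upwards with n
    exact lt_of_lt_of_le ha (integral_nonneg fun x => abs_nonneg _)
  intro ε hε
  -- uniform integrability level
  obtain ⟨M₀, hM₀⟩ := hui (ε / (8 * C)) (by positivity)
  set M : ℝ := max M₀ 0 with hMdef
  have hMnn : 0 ≤ M := le_max_right _ _
  have hM : ∀ n, ∫ x in {x | M < g n x}, g n x ∂μ < ε / (8 * C) := by
    intro n
    refine lt_of_le_of_lt ?_ (hM₀ n)
    refine setIntegral_mono_set (hgint n).integrableOn
      (ae_of_all _ fun x => hgnn n x) (ae_of_all _ fun x hx => ?_)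
    exact lt_of_le_of_lt (le_max_left _ _) hx
  -- approximation by a bounded continuous function, then clamp
  have hδpos : 0 < ε / (8 * (M + 1)) := by positivity
  obtain ⟨ψ₀, hψ₀, hψ₀int⟩ := hφint.exists_boundedContinuous_integral_sub_le hδpos
  set δ : ℝ := ε / (8 * (M + 1)) with hδdef
  set ψ : X → ℝ := fun x => max (-C) (min C (ψ₀ x)) with hψdef
  have hψcont : Continuous ψ := continuous_const.max (continuous_const.min ψ₀.continuous)
  have hψm : Measurable ψ := hψcont.measurable
  have hψC : ∀ x, |ψ x| ≤ C := by
    intro x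
    rw [abs_le]
    exact ⟨le_max_left _ _, max_le (neg_le_self hCpos.le) ((min_le_left _ _))⟩
  have hψint : Integrable ψ μ :=
    (integrable_const C).mono' hψm.aestronglyMeasurable
      (ae_of_all _ fun x => by simpa using hψC x)
  -- the error function h
  set h : X → ℝ := fun x => |φ x - ψ x| with hhdef
  have hhm : Measurable h := (hφm.sub hψm).abs
  have hhnn : ∀ x, 0 ≤ h x := fun x => abs_nonneg _
  have hhC : ∀ x, h x ≤ 2 * C := by
    intro x
    calc |φ x - ψ x| ≤ |φ x| + |ψ x| := abs_sub _ _
      _ ≤ C + C := add_le_add (hφC x) (hψC x)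
      _ = 2 * C := by ring
  have hhint : Integrable h μ := (hφint.sub hψint).abs
  have hhδ : ∫ x, h x ∂μ ≤ δ := by
    refine le_trans (integral_mono hhint (hφint.sub hψ₀int).abs fun x => ?_) ?_
    · exact clamp_aux (neg_le_of_abs_le (hφC x)) (le_of_abs_le (hφC x))
    · simpa [Real.norm_eq_abs] using hψ₀
  have hδle : δ ≤ ε / 8 := by
    rw [hδdef]
    apply div_le_div_of_nonneg_left hε.le (by norm_num)
    nlinarith
  -- key bound on ∫ h ∘ T n
  have key : ∀ n, ∫ x, h (T n x) ∂μ ≤ ε / 4 + ε / 8 := by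
    intro n
    haveI : IsProbabilityMeasure (Measure.map (T n) μ) :=
      Measure.isProbabilityMeasure_map (hTm n).aemeasurable
    have hhintmap : Integrable h (Measure.map (T n) μ) :=
      (integrable_const (2 * C)).mono' hhm.aestronglyMeasurable
        (ae_of_all _ fun x => by
          simpa [Real.norm_eq_abs, abs_of_nonneg (hhnn x)] using hhC x)
    have step1 : ∫ x, h (T n x) ∂μ = ∫ x, g n x • h x ∂μ := by
      rw [← integral_map (hTm n).aemeasurable hhintmap.aestronglyMeasurable,
        ← integral_rnDeriv_smul (hac n)]
    have hghint : Integrable (fun x => g n x • h x) μ :=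
      (integrable_rnDeriv_smul_iff (hac n)).2 hhintmap
    set s : Set X := {x | M < g n x} with hsdef
    have hs : MeasurableSet s := measurableSet_lt measurable_const (hgm n)
    have split : ∫ x, g n x • h x ∂μ
        = (∫ x in s, g n x • h x ∂μ) + ∫ x in sᶜ, g n x • h x ∂μ :=
      (integral_add_compl hs hghint).symm
    have bound1 : ∫ x in s, g n x • h x ∂μ ≤ ε / 4 := by
      have e1 : ∫ x in s, g n x • h x ∂μ ≤ ∫ x in s, g n x * (2 * C) ∂μ := by
        refine setIntegral_mono_on hghint.integrableOn
          ((hgint n).mul_const _).integrableOn hs fun x _ => ?_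
        exact mul_le_mul_of_nonneg_left (hhC x) (hgnn n x)
      have e2 : ∫ x in s, g n x * (2 * C) ∂μ = (∫ x in s, g n x ∂μ) * (2 * C) :=
        integral_mul_const _ _
      have e3 : (∫ x in s, g n x ∂μ) * (2 * C) ≤ (ε / (8 * C)) * (2 * C) :=
        mul_le_mul_of_nonneg_right (hM n).le (by positivity)
      have e4 : (ε / (8 * C)) * (2 * C) = ε / 4 := by
        field_simp
        ring
      linarith
    have bound2 : ∫ x in sᶜ, g n x • h x ∂μ ≤ ε / 8 := by
      have e1 : ∫ x in sᶜ, g n x • h x ∂μ ≤ ∫ x in sᶜ, M * h x ∂μ := by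
        refine setIntegral_mono_on hghint.integrableOn
          (hhint.const_mul M).integrableOn hs.compl fun x hx => ?_
        have hgx : g n x ≤ M := not_lt.1 hx
        exact mul_le_mul_of_nonneg_right hgx (hhnn x)
      have e2 : ∫ x in sᶜ, M * h x ∂μ = M * ∫ x in sᶜ, h x ∂μ := integral_const_mul _ _
      have e3 : ∫ x in sᶜ, h x ∂μ ≤ ∫ x, h x ∂μ :=
        setIntegral_le_integral hhint (ae_of_all _ hhnn)
      have e4 : M * ∫ x in sᶜ, h x ∂μ ≤ M * δ :=
        mul_le_mul_of_nonneg_left (e3.trans hhδ) hMnn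
      have e5 : M * δ ≤ ε / 8 := by
        rw [hδdef, mul_div_assoc']
        rw [div_le_div_iff₀ (by positivity) (by norm_num)]
        nlinarith
      linarith
    rw [step1, split]
    exact add_le_add bound1 bound2
  -- the middle term tends to 0
  have hterm2 : Tendsto (fun n => ∫ x, |ψ (T n x) - ψ x| ∂μ) atTop (nhds 0) := by
    have := tendsto_integral_of_dominated_convergence (F := fun n x => |ψ (T n x) - ψ x|)
      (f := fun _ => (0:ℝ)) (bound := fun _ => 2 * C)
      (fun n => ((hψm.comp (hTm n)).sub hψm).abs.aestronglyMeasurable)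
      (integrable_const _)
      (fun n => ae_of_all _ fun x => by
        rw [Real.norm_eq_abs, abs_abs]
        calc |ψ (T n x) - ψ x| ≤ |ψ (T n x)| + |ψ x| := abs_sub _ _
          _ ≤ C + C := add_le_add (hψC _) (hψC _)
          _ = 2 * C := by ring)
      (hTconv.mono fun x hx => by
        have h1 : Tendsto (fun n => ψ (T n x)) atTop (nhds (ψ x)) :=
          (hψcont.continuousAt.tendsto).comp hx
        have h2 : Tendsto (fun n => ψ (T n x) - ψ x) atTop (nhds (ψ x - ψ x)) :=
          h1.sub tendsto_const_nhds
        rw [sub_self] at h2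
        simpa using h2.abs)
    simpa using this
  have hterm2' : ∀ᶠ n in atTop, ∫ x, |ψ (T n x) - ψ x| ∂μ < ε / 4 :=
    hterm2.eventually_lt_const (by positivity)
  filter_upwards [hterm2'] with n hn
  -- triangle inequality
  have hintA : Integrable (fun x => h (T n x)) μ :=
    (integrable_const (2 * C)).mono' (hhm.comp (hTm n)).aestronglyMeasurable
      (ae_of_all _ fun x => by
        simpa [Real.norm_eq_abs, abs_of_nonneg (hhnn _)] using hhC (T n x))
  have hintB : Integrable (fun x => |ψ (T n x) - ψ x|) μ :=
    (integrable_const (2 * C)).mono' ((hψm.comp (hTm n)).sub hψm).abs.aestronglyMeasurable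
      (ae_of_all _ fun x => by
        rw [Real.norm_eq_abs, abs_abs]
        calc |ψ (T n x) - ψ x| ≤ |ψ (T n x)| + |ψ x| := abs_sub _ _
          _ ≤ C + C := add_le_add (hψC _) (hψC _)
          _ = 2 * C := by ring)
  have tri : ∫ x, |φ (T n x) - φ x| ∂μ
      ≤ (∫ x, h (T n x) ∂μ) + (∫ x, |ψ (T n x) - ψ x| ∂μ) + ∫ x, h x ∂μ := by
    have hintAB : Integrable (fun x => h (T n x) + |ψ (T n x) - ψ x|) μ := hintA.add hintB
    have hintABC : Integrable (fun x => h (T n x) + |ψ (T n x) - ψ x| + h x) μ :=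
      hintAB.add hhint
    have step : ∫ x, |φ (T n x) - φ x| ∂μ
        ≤ ∫ x, (h (T n x) + |ψ (T n x) - ψ x| + h x) ∂μ := by
      refine integral_mono ?_ hintABC fun x => ?_
      · exact (integrable_const (2 * C)).mono'
          ((hφm.comp (hTm n)).sub hφm).abs.aestronglyMeasurable
          (ae_of_all _ fun x => by
            rw [Real.norm_eq_abs, abs_abs]
            calc |φ (T n x) - φ x| ≤ |φ (T n x)| + |φ x| := abs_sub _ _
              _ ≤ C + C := add_le_add (hφC _) (hφC _)
              _ = 2 * C := by ring)
      · have : |φ (T n x) - φ x|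
            ≤ |φ (T n x) - ψ (T n x)| + |ψ (T n x) - ψ x| + |ψ x - φ x| := by
          calc |φ (T n x) - φ x|
              = |(φ (T n x) - ψ (T n x)) + (ψ (T n x) - ψ x) + (ψ x - φ x)| := by ring_nf
            _ ≤ _ := by
                exact (abs_add_le _ _).trans (add_le_add_left (abs_add_le _ _) _)
        simpa [hhdef, abs_sub_comm (ψ x) (φ x)] using this
    rw [integral_add hintAB hhint, integral_add hintA hintB] at step
    exact step
  have : ∫ x, |φ (T n x) - φ x| ∂μ < (ε / 4 + ε / 8) + ε / 4 + ε / 8 := by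
    have := key n
    have h3 : ∫ x, h x ∂μ ≤ ε / 8 := hhδ.trans hδle
    linarith
  linarith
end
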